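/- The context-sharing cut rule Cut_CS is derivable in LBIZ + Cut: from Γ̃₃; Γ₁ ⊢ F and Γ₂(F; Γ₁) ⊢ H one can derive Γ₂(Γ̃₃; Γ₁) ⊢ H. -/

import Mathlib

/-- BI formulas: propositional variables, ⊤, ⊥, ⊤*, ∧, ∨, ⊃, *, −∗. -/
inductive BI : Type
  | var : Nat → BI
  | top : BI
  | bot : BI
  | mtop : BI
  | conj : BI → BI → BI
  | disj : BI → BI → BI
  | imp : BI → BI → BI
  | star : BI → BI → BI
  | wand : BI → BI → BI

/-- Bunches (BI structures): Γ := F | Γ; Γ | Γ, Γ. -/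
inductive Bunch : Type
  | fm : BI → Bunch
  | semi : Bunch → Bunch → Bunch   -- additive ';'
  | comma : Bunch → Bunch → Bunch  -- multiplicative ','

/-- Structural congruence: full associativity and commutativity of ';' and ','. -/
inductive BunchEq : Bunch → Bunch → Prop
  | refl (Γ : Bunch) : BunchEq Γ Γ
  | symm {a b} : BunchEq a b → BunchEq b a
  | trans {a b c} : BunchEq a b → BunchEq b c → BunchEq a c
  | semiComm (a b : Bunch) : BunchEq (.semi a b) (.semi b a)
  | semiAssoc (a b c : Bunch) : BunchEq (.semi (.semi a b) c) (.semi a (.semi b c))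
  | commaComm (a b : Bunch) : BunchEq (.comma a b) (.comma b a)
  | commaAssoc (a b c : Bunch) : BunchEq (.comma (.comma a b) c) (.comma a (.comma b c))
  | semiCongr {a a' b b'} : BunchEq a a' → BunchEq b b' → BunchEq (.semi a b) (.semi a' b')
  | commaCongr {a a' b b'} : BunchEq a a' → BunchEq b b' → BunchEq (.comma a b) (.comma a' b')

/-- Bunched contexts with a single hole. -/
inductive Ctx : Type
  | hole : Ctx
  | semiL : Ctx → Bunch → Ctx
  | semiR : Bunch → Ctx → Ctx
  | commaL : Ctx → Bunch → Ctx
  | commaR : Bunch → Ctx → Ctx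

/-- Filling the hole of a context with a bunch. -/
def Ctx.fill : Ctx → Bunch → Bunch
  | .hole, Δ => Δ
  | .semiL C Γ, Δ => .semi (C.fill Δ) Γ
  | .semiR Γ C, Δ => .semi Γ (C.fill Δ)
  | .commaL C Γ, Δ => .comma (C.fill Δ) Γ
  | .commaR Γ C, Δ => .comma Γ (C.fill Δ)

/-- `osemi Γ̃ Δ` is `Γ̃; Δ`, where `Γ̃` may be empty. -/
def osemi : Option Bunch → Bunch → Bunch
  | none, b => b
  | some a, b => .semi a b

/-- `ocomma Γ̃ Δ` is `Γ̃, Δ`, where `Γ̃` may be empty. -/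
def ocomma : Option Bunch → Bunch → Bunch
  | none, b => b
  | some a, b => .comma a b

/-- The weakening preorder ⪯ on bunches: smallest reflexive (up to structural
congruence) and transitive relation with Γ(Δ) ⪯ Γ(Δ; Γ'). -/
inductive Wle : Bunch → Bunch → Prop
  | ofEq {a b} : BunchEq a b → Wle a b
  | weak (C : Ctx) (Δ Γ' : Bunch) : Wle (C.fill Δ) (C.fill (.semi Δ Γ'))
  | trans {a b c} : Wle a b → Wle b c → Wle a c

/-- `(⊤*; Γ̃)` where `Γ̃` is possibly empty. -/
def mte : Option Bunch → Bunch
  | none => .fm .mtop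
  | some Δ => .semi (.fm .mtop) Δ

/-- `Essence Γ₁ Γ₂` : Γ₂ is an essence of Γ₁. -/
inductive Essence : Bunch → Bunch → Prop
  | ofEq {a b} : BunchEq a b → Essence a b
  | insert {a} (C : Ctx) (Γ' : Bunch) (Δ : Option Bunch) :
      Essence a (C.fill Γ') → Essence a (C.fill (.comma Γ' (mte Δ)))
  | insertSemi {a} (C : Ctx) (Γ' Γ'' : Bunch) (Δ : Option Bunch) :
      Essence a (C.fill (.semi Γ' Γ'')) →
      Essence a (C.fill (.semi (.comma Γ' (mte Δ)) Γ''))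
  | congr {a b c} : Essence a b → BunchEq b c → Essence a c

/-- `Candidate Γ R₁ R₂` : (R₁, R₂) is a candidate of Γ. -/
def Candidate (Γ R₁ R₂ : Bunch) : Prop :=
  (R₂ = .fm .mtop ∧ Wle R₁ Γ) ∨ Wle (.comma R₁ R₂) Γ

/-- The representing preorder ⪯̂. -/
inductive RWle : Bunch → Bunch → Prop
  | ofEq {a b} : BunchEq a b → RWle a b
  | weak (a b : Bunch) : RWle a (.semi a b)
  | weakComma (a b c : Bunch) : RWle (.comma a b) (.comma a (.semi b c))
  | trans {a b c} : RWle a b → RWle b c → RWle a c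

/-- `RepCandidate Γ R₁ R₂` : (R₁, R₂) is a representing candidate of Γ. -/
def RepCandidate (Γ R₁ R₂ : Bunch) : Prop :=
  (R₂ = .fm .mtop ∧ RWle R₁ Γ) ∨ RWle (.comma R₁ R₂) Γ

/-- The LBIZ sequent calculus (parametrised by the candidate relation used in
*R and −∗L, and by whether the Cut rule is available), with derivation depth.
There are no structural rules; bunches are identified up to
associativity/commutativity via the depth-neutral `equiv` rule. -/
inductive LBIZ (Cand : Bunch → Bunch → Bunch → Prop) (cut : Bool) :
    Bunch → BI → Nat → Prop
  | id (Γt : Option Bunch) (p : Nat) {Δ : Bunch} :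
      Essence (osemi Γt (.fm (.var p))) Δ → LBIZ Cand cut Δ (.var p) 1
  | botL (C : Ctx) (H : BI) : LBIZ Cand cut (C.fill (.fm .bot)) H 1
  | topR (Γ : Bunch) : LBIZ Cand cut Γ .top 1
  | mtopR (Γt : Option Bunch) {Δ : Bunch} :
      Essence (osemi Γt (.fm .mtop)) Δ → LBIZ Cand cut Δ .mtop 1
  | conjL {C : Ctx} {F G H n} :
      LBIZ Cand cut (C.fill (.semi (.fm F) (.fm G))) H n →
      LBIZ Cand cut (C.fill (.fm (.conj F G))) H (n + 1)
  | conjR {Γ F G n m} :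
      LBIZ Cand cut Γ F n → LBIZ Cand cut Γ G m →
      LBIZ Cand cut Γ (.conj F G) (max n m + 1)
  | disjL {C : Ctx} {F G H n m} :
      LBIZ Cand cut (C.fill (.fm F)) H n → LBIZ Cand cut (C.fill (.fm G)) H m →
      LBIZ Cand cut (C.fill (.fm (.disj F G))) H (max n m + 1)
  | disjR₁ {Γ F G n} : LBIZ Cand cut Γ F n → LBIZ Cand cut Γ (.disj F G) (n + 1)
  | disjR₂ {Γ F G n} : LBIZ Cand cut Γ G n → LBIZ Cand cut Γ (.disj F G) (n + 1)
  | impL (Γt : Option Bunch) {F G : BI} {Δ : Bunch} {C : Ctx} {H n m} :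
      Essence (osemi Γt (.fm (.imp F G))) Δ →
      LBIZ Cand cut Δ F n →
      LBIZ Cand cut (C.fill (.semi (.fm G) Δ)) H m →
      LBIZ Cand cut (C.fill Δ) H (max n m + 1)
  | impR {Γ F G n} :
      LBIZ Cand cut (.semi Γ (.fm F)) G n → LBIZ Cand cut Γ (.imp F G) (n + 1)
  | starL {C : Ctx} {F G H n} :
      LBIZ Cand cut (C.fill (.comma (.fm F) (.fm G))) H n →
      LBIZ Cand cut (C.fill (.fm (.star F G))) H (n + 1)
  | starR {Γ' R₁ R₂ : Bunch} {F G n m} :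
      (Cand Γ' R₁ R₂ ∨ Cand Γ' R₂ R₁) →
      LBIZ Cand cut R₁ F n → LBIZ Cand cut R₂ G m →
      LBIZ Cand cut Γ' (.star F G) (max n m + 1)
  | wandL (Γ'o Rej : Option Bunch) (Rei : Bunch) (Γt : Option Bunch)
      {F G : BI} {Δ : Bunch} {C : Ctx} {H n m} :
      Essence (osemi Γt (.fm (.wand F G))) Δ →
      ((Γ'o = none ∧ Rei = .fm .mtop ∧ Rej = none) ∨
        (∃ Γ' Rj, Γ'o = some Γ' ∧ Rej = some Rj ∧
          (Cand Γ' Rei Rj ∨ Cand Γ' Rj Rei))) →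
      LBIZ Cand cut Rei F n →
      LBIZ Cand cut (C.fill (.semi (ocomma Rej (.fm G)) (ocomma Γ'o Δ))) H m →
      LBIZ Cand cut (C.fill (ocomma Γ'o Δ)) H (max n m + 1)
  | wandR {Γ F G n} :
      LBIZ Cand cut (.comma Γ (.fm F)) G n → LBIZ Cand cut Γ (.wand F G) (n + 1)
  | equiv {Γ Γ' H n} : BunchEq Γ Γ' → LBIZ Cand cut Γ H n → LBIZ Cand cut Γ' H n
  | cutRule {Γ₁ : Bunch} {F : BI} {C : Ctx} {G n m} :
      cut = true →
      LBIZ Cand cut Γ₁ F n → LBIZ Cand cut (C.fill (.fm F)) G m →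
      LBIZ Cand cut (C.fill Γ₁) G (max n m + 1)

/-- LBIZ proper: candidate relation `Candidate`, no Cut. -/
abbrev LBIZc : Bunch → BI → Nat → Prop := LBIZ Candidate false

/-- The LBI sequent calculus (without Cut), parametrised by whether contraction
is available for arbitrary bunches (`full = true`) or only for single formulas. -/
inductive LBIg (full : Bool) : Bunch → BI → Prop
  | id (F : BI) : LBIg full (.fm F) F
  | botL (C : Ctx) (H : BI) : LBIg full (C.fill (.fm .bot)) H
  | topR (Γ : Bunch) : LBIg full Γ .top
  | mtopR : LBIg full (.fm .mtop) .mtop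
  | conjL {C : Ctx} {F G H} :
      LBIg full (C.fill (.semi (.fm F) (.fm G))) H →
      LBIg full (C.fill (.fm (.conj F G))) H
  | conjR {Γ F G} : LBIg full Γ F → LBIg full Γ G → LBIg full Γ (.conj F G)
  | disjL {C : Ctx} {F G H} :
      LBIg full (C.fill (.fm F)) H → LBIg full (C.fill (.fm G)) H →
      LBIg full (C.fill (.fm (.disj F G))) H
  | disjR₁ {Γ F G} : LBIg full Γ F → LBIg full Γ (.disj F G)
  | disjR₂ {Γ F G} : LBIg full Γ G → LBIg full Γ (.disj F G)
  | impL {Γ₁ : Bunch} {C : Ctx} {F G H} :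
      LBIg full Γ₁ F → LBIg full (C.fill (.semi Γ₁ (.fm G))) H →
      LBIg full (C.fill (.semi Γ₁ (.fm (.imp F G)))) H
  | impR {Γ F G} : LBIg full (.semi Γ (.fm F)) G → LBIg full Γ (.imp F G)
  | starL {C : Ctx} {F G H} :
      LBIg full (C.fill (.comma (.fm F) (.fm G))) H →
      LBIg full (C.fill (.fm (.star F G))) H
  | starR {Γ₁ Γ₂ F G} :
      LBIg full Γ₁ F → LBIg full Γ₂ G → LBIg full (.comma Γ₁ Γ₂) (.star F G)
  | wandL {Γ₁ : Bunch} {C : Ctx} {F G H} :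
      LBIg full Γ₁ F → LBIg full (C.fill (.fm G)) H →
      LBIg full (C.fill (.comma Γ₁ (.fm (.wand F G)))) H
  | wandR {Γ F G} : LBIg full (.comma Γ (.fm F)) G → LBIg full Γ (.wand F G)
  | wk {C : Ctx} {Γ₁ Γ₂ H} :
      LBIg full (C.fill Γ₁) H → LBIg full (C.fill (.semi Γ₁ Γ₂)) H
  | ctr {C : Ctx} {Γ₁ H} :
      (full = true ∨ ∃ A, Γ₁ = .fm A) →
      LBIg full (C.fill (.semi Γ₁ Γ₁)) H → LBIg full (C.fill Γ₁) H
  | eqAnt1a {C : Ctx} {Γ₁ H} :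
      LBIg full (C.fill (.semi Γ₁ (.fm .top))) H → LBIg full (C.fill Γ₁) H
  | eqAnt1b {C : Ctx} {Γ₁ H} :
      LBIg full (C.fill Γ₁) H → LBIg full (C.fill (.semi Γ₁ (.fm .top))) H
  | eqAnt2a {C : Ctx} {Γ₁ H} :
      LBIg full (C.fill (.comma Γ₁ (.fm .mtop))) H → LBIg full (C.fill Γ₁) H
  | eqAnt2b {C : Ctx} {Γ₁ H} :
      LBIg full (C.fill Γ₁) H → LBIg full (C.fill (.comma Γ₁ (.fm .mtop))) H
  | equiv {Γ Γ' H} : BunchEq Γ Γ' → LBIg full Γ H → LBIg full Γ' H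

/-- LBI with unrestricted (structural) contraction. -/
abbrev LBI : Bunch → BI → Prop := LBIg true

/-- One application of the LBI weakening rule Wk L on a sequent
(also allowing structural-congruence adjustments). -/
inductive WkStep : Bunch × BI → Bunch × BI → Prop
  | step (C : Ctx) (Δ Γ' : Bunch) (H : BI) :
      WkStep (C.fill Δ, H) (C.fill (.semi Δ Γ'), H)
  | equiv {Γ₁ Γ₂ : Bunch} (H : BI) : BunchEq Γ₁ Γ₂ → WkStep (Γ₁, H) (Γ₂, H)

/-- One application of Wk L or of either direction of EqAnt₂ on a sequent. -/
inductive WkEq2Step : Bunch × BI → Bunch × BI → Prop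
  | wk (C : Ctx) (Δ Γ' : Bunch) (H : BI) :
      WkEq2Step (C.fill Δ, H) (C.fill (.semi Δ Γ'), H)
  | eq2a (C : Ctx) (Γ₁ : Bunch) (H : BI) :
      WkEq2Step (C.fill (.comma Γ₁ (.fm .mtop)), H) (C.fill Γ₁, H)
  | eq2b (C : Ctx) (Γ₁ : Bunch) (H : BI) :
      WkEq2Step (C.fill Γ₁, H) (C.fill (.comma Γ₁ (.fm .mtop)), H)
  | equiv {Γ₁ Γ₂ : Bunch} (H : BI) : BunchEq Γ₁ Γ₂ → WkEq2Step (Γ₁, H) (Γ₂, H)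

/-- The preorder generated by weakening together with insertion of
multiplicative-unit components. -/
inductive WleM : Bunch → Bunch → Prop
  | ofEq {a b} : BunchEq a b → WleM a b
  | weak (C : Ctx) (Δ Γ' : Bunch) : WleM (C.fill Δ) (C.fill (.semi Δ Γ'))
  | munit (C : Ctx) (Δ : Bunch) : WleM (C.fill Δ) (C.fill (.comma Δ (.fm .mtop)))
  | trans {a b c} : WleM a b → WleM b c → WleM a c


/-! ### Auxiliary development -/

section Aux

open Bunch

/-- Composition of contexts. -/
def Ctx.comp : Ctx → Ctx → Ctx
  | .hole, E => E
  | .semiL c b, E => .semiL (c.comp E) b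
  | .semiR b c, E => .semiR b (c.comp E)
  | .commaL c b, E => .commaL (c.comp E) b
  | .commaR b c, E => .commaR b (c.comp E)

theorem comp_fill (C E : Ctx) (x : Bunch) : (C.comp E).fill x = C.fill (E.fill x) := by
  induction C <;> simp [Ctx.comp, Ctx.fill, *]

theorem comp_hole (C : Ctx) : C.comp .hole = C := by
  induction C <;> simp [Ctx.comp, *]

theorem fill_congr (C : Ctx) {x y : Bunch} (h : BunchEq x y) :
    BunchEq (C.fill x) (C.fill y) := by
  induction C with
  | hole => exact h
  | semiL c b ih => exact .semiCongr ih (.refl _)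
  | semiR b c ih => exact .semiCongr (.refl _) ih
  | commaL c b ih => exact .commaCongr ih (.refl _)
  | commaR b c ih => exact .commaCongr (.refl _) ih

theorem essFill {x y : Bunch} (h : Essence x y) (E : Ctx) :
    Essence (E.fill x) (E.fill y) := by
  induction h with
  | ofEq h => exact .ofEq (fill_congr E h)
  | insert C Γ' Δ _ ih =>
      have := Essence.insert (E.comp C) Γ' Δ (by rwa [comp_fill])
      rwa [comp_fill] at this
  | insertSemi C Γ' Γ'' Δ _ ih =>
      have := Essence.insertSemi (E.comp C) Γ' Γ'' Δ (by rwa [comp_fill])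
      rwa [comp_fill] at this
  | congr _ h ih => exact .congr ih (fill_congr E h)

theorem essPre {x' x y : Bunch} (e : BunchEq x' x) (h : Essence x y) : Essence x' y := by
  induction h with
  | ofEq h => exact .ofEq (e.trans h)
  | insert C Γ' Δ _ ih => exact .insert C Γ' Δ ih
  | insertSemi C Γ' Γ'' Δ _ ih => exact .insertSemi C Γ' Γ'' Δ ih
  | congr _ h ih => exact .congr ih h

theorem essTrans {x y z : Bunch} (h₁ : Essence x y) (h₂ : Essence y z) : Essence x z := by
  induction h₂ with
  | ofEq h => exact .congr h₁ h
  | insert C Γ' Δ _ ih => exact .insert C Γ' Δ ih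
  | insertSemi C Γ' Γ'' Δ _ ih => exact .insertSemi C Γ' Γ'' Δ ih
  | congr _ h ih => exact .congr ih h

theorem wleFill {x y : Bunch} (h : Wle x y) (E : Ctx) : Wle (E.fill x) (E.fill y) := by
  induction h with
  | ofEq h => exact .ofEq (fill_congr E h)
  | weak C Δ J =>
      have := Wle.weak (E.comp C) Δ J
      rwa [comp_fill, comp_fill] at this
  | trans _ _ ih₁ ih₂ => exact ih₁.trans ih₂

theorem wlePairS {a a' b b' : Bunch} (h₁ : Wle a a') (h₂ : Wle b b') :
    Wle (.semi a b) (.semi a' b') :=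
  (wleFill h₁ (.semiL .hole b)).trans (wleFill h₂ (.semiR a' .hole))

theorem wlePairC {a a' b b' : Bunch} (h₁ : Wle a a') (h₂ : Wle b b') :
    Wle (.comma a b) (.comma a' b') :=
  (wleFill h₁ (.commaL .hole b)).trans (wleFill h₂ (.commaR a' .hole))

/-- top-level constructor kind, invariant under `BunchEq`. -/
def bkind : Bunch → Nat
  | .fm _ => 0
  | .semi _ _ => 1
  | .comma _ _ => 2

theorem bkind_eq {x y : Bunch} (h : BunchEq x y) : bkind x = bkind y := by
  induction h <;> simp_all [bkind]

theorem no_semi_comma {a b c d : Bunch} (h : BunchEq (Bunch.semi a b) (Bunch.comma c d)) :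
    False := by simpa [bkind] using bkind_eq h

theorem fill_eq_fm {C : Ctx} {x : Bunch} {φ : BI} (h : C.fill x = .fm φ) :
    C = .hole ∧ x = .fm φ := by
  cases C <;> simp [Ctx.fill] at h ⊢ <;> exact h

/-- Two–position split lemma (syntactic). -/
theorem split : ∀ (D : Ctx) (δ : Bunch) (C : Ctx) (P : Bunch), D.fill δ = C.fill P →
    (∃ C₀, C = D.comp C₀ ∧ δ = C₀.fill P) ∨
    (∃ D₀, D = C.comp D₀ ∧ P = D₀.fill δ) ∨
    (∃ Pf Qf : Bunch → Ctx, (∀ X Y, (Pf X).fill Y = (Qf Y).fill X) ∧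
      D = Qf P ∧ C = Pf δ) := by
  intro D
  induction D with
  | hole =>
      intro δ C P h
      exact .inl ⟨C, rfl, h⟩
  | semiL D₁ t ih =>
      intro δ C P h
      cases C with
      | hole => exact .inr (.inl ⟨.semiL D₁ t, rfl, h.symm⟩)
      | semiL C₁ t' =>
          obtain ⟨h₁, rfl⟩ : D₁.fill δ = C₁.fill P ∧ t = t' := by
            simpa [Ctx.fill] using h
          rcases ih δ C₁ P h₁ with ⟨C₀, rfl, hδ⟩ | ⟨D₀, rfl, hP⟩ | ⟨Pf, Qf, hPQ, rfl, rfl⟩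
          · exact .inl ⟨C₀, rfl, hδ⟩
          · exact .inr (.inl ⟨D₀, rfl, hP⟩)
          · exact .inr (.inr ⟨fun X => .semiL (Pf X) t, fun Y => .semiL (Qf Y) t,
              fun X Y => by simp [Ctx.fill, hPQ], rfl, rfl⟩)
      | semiR t' C₁ =>
          obtain ⟨h₁, h₂⟩ : D₁.fill δ = t' ∧ t = C₁.fill P := by
            simpa [Ctx.fill] using h
          subst h₂
          exact .inr (.inr ⟨fun X => .semiR (D₁.fill X) C₁, fun Y => .semiL D₁ (C₁.fill Y),
            fun X Y => rfl, rfl, by simp [h₁]⟩)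
      | commaL C₁ t' => simp [Ctx.fill] at h
      | commaR t' C₁ => simp [Ctx.fill] at h
  | semiR t D₁ ih =>
      intro δ C P h
      cases C with
      | hole => exact .inr (.inl ⟨.semiR t D₁, rfl, h.symm⟩)
      | semiR t' C₁ =>
          obtain ⟨rfl, h₁⟩ : t = t' ∧ D₁.fill δ = C₁.fill P := by
            simpa [Ctx.fill] using h
          rcases ih δ C₁ P h₁ with ⟨C₀, rfl, hδ⟩ | ⟨D₀, rfl, hP⟩ | ⟨Pf, Qf, hPQ, rfl, rfl⟩
          · exact .inl ⟨C₀, rfl, hδ⟩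
          · exact .inr (.inl ⟨D₀, rfl, hP⟩)
          · exact .inr (.inr ⟨fun X => .semiR t (Pf X), fun Y => .semiR t (Qf Y),
              fun X Y => by simp [Ctx.fill, hPQ], rfl, rfl⟩)
      | semiL C₁ t' =>
          obtain ⟨h₁, h₂⟩ : t = C₁.fill P ∧ D₁.fill δ = t' := by
            simpa [Ctx.fill] using h
          subst h₁
          exact .inr (.inr ⟨fun X => .semiL C₁ (D₁.fill X), fun Y => .semiR (C₁.fill Y) D₁,
            fun X Y => rfl, rfl, by simp [h₂]⟩)
      | commaL C₁ t' => simp [Ctx.fill] at h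
      | commaR t' C₁ => simp [Ctx.fill] at h
  | commaL D₁ t ih =>
      intro δ C P h
      cases C with
      | hole => exact .inr (.inl ⟨.commaL D₁ t, rfl, h.symm⟩)
      | commaL C₁ t' =>
          obtain ⟨h₁, rfl⟩ : D₁.fill δ = C₁.fill P ∧ t = t' := by
            simpa [Ctx.fill] using h
          rcases ih δ C₁ P h₁ with ⟨C₀, rfl, hδ⟩ | ⟨D₀, rfl, hP⟩ | ⟨Pf, Qf, hPQ, rfl, rfl⟩
          · exact .inl ⟨C₀, rfl, hδ⟩
          · exact .inr (.inl ⟨D₀, rfl, hP⟩)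
          · exact .inr (.inr ⟨fun X => .commaL (Pf X) t, fun Y => .commaL (Qf Y) t,
              fun X Y => by simp [Ctx.fill, hPQ], rfl, rfl⟩)
      | commaR t' C₁ =>
          obtain ⟨h₁, h₂⟩ : D₁.fill δ = t' ∧ t = C₁.fill P := by
            simpa [Ctx.fill] using h
          subst h₂
          exact .inr (.inr ⟨fun X => .commaR (D₁.fill X) C₁, fun Y => .commaL D₁ (C₁.fill Y),
            fun X Y => rfl, rfl, by simp [h₁]⟩)
      | semiL C₁ t' => simp [Ctx.fill] at h
      | semiR t' C₁ => simp [Ctx.fill] at h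
  | commaR t D₁ ih =>
      intro δ C P h
      cases C with
      | hole => exact .inr (.inl ⟨.commaR t D₁, rfl, h.symm⟩)
      | commaR t' C₁ =>
          obtain ⟨rfl, h₁⟩ : t = t' ∧ D₁.fill δ = C₁.fill P := by
            simpa [Ctx.fill] using h
          rcases ih δ C₁ P h₁ with ⟨C₀, rfl, hδ⟩ | ⟨D₀, rfl, hP⟩ | ⟨Pf, Qf, hPQ, rfl, rfl⟩
          · exact .inl ⟨C₀, rfl, hδ⟩
          · exact .inr (.inl ⟨D₀, rfl, hP⟩)
          · exact .inr (.inr ⟨fun X => .commaR t (Pf X), fun Y => .commaR t (Qf Y),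
              fun X Y => by simp [Ctx.fill, hPQ], rfl, rfl⟩)
      | commaL C₁ t' =>
          obtain ⟨h₁, h₂⟩ : t = C₁.fill P ∧ D₁.fill δ = t' := by
            simpa [Ctx.fill] using h
          subst h₁
          exact .inr (.inr ⟨fun X => .commaL C₁ (D₁.fill X), fun Y => .commaR (C₁.fill Y) D₁,
            fun X Y => rfl, rfl, by simp [h₂]⟩)
      | semiL C₁ t' => simp [Ctx.fill] at h
      | semiR t' C₁ => simp [Ctx.fill] at h

/-- one-direction tracking statement -/
def FmTrackDir (x y : Bunch) : Prop :=
  ∀ (C : Ctx) (φ : BI), x = C.fill (.fm φ) →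
    ∃ C₂, y = Ctx.fill C₂ (.fm φ) ∧ ∀ Δ, BunchEq (C.fill Δ) (Ctx.fill C₂ Δ)

theorem fmTrack2 {x y : Bunch} (h : BunchEq x y) : FmTrackDir x y ∧ FmTrackDir y x := by
  induction h with
  | refl x => exact ⟨fun C φ h => ⟨C, h, fun Δ => .refl _⟩, fun C φ h => ⟨C, h, fun Δ => .refl _⟩⟩
  | symm h ih => exact ⟨ih.2, ih.1⟩
  | trans h₁ h₂ ih₁ ih₂ =>
      constructor
      · intro C φ hx
        rcases ih₁.1 C φ hx with ⟨C₁, hy, p₁⟩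
        rcases ih₂.1 C₁ φ hy with ⟨C₂, hz, p₂⟩
        exact ⟨C₂, hz, fun Δ => (p₁ Δ).trans (p₂ Δ)⟩
      · intro C φ hx
        rcases ih₂.2 C φ hx with ⟨C₁, hy, p₁⟩
        rcases ih₁.2 C₁ φ hy with ⟨C₂, hz, p₂⟩
        exact ⟨C₂, hz, fun Δ => (p₁ Δ).trans (p₂ Δ)⟩
  | semiComm a b =>
      constructor
      · intro C φ hx
        cases C with
        | hole => exact absurd hx (by simp [Ctx.fill])
        | semiL C₁ t =>
            obtain ⟨h₁, rfl⟩ : a = C₁.fill (.fm φ) ∧ b = t := by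
              simpa [Ctx.fill, eq_comm] using hx
            exact ⟨.semiR b C₁, by simp [Ctx.fill, h₁],
              fun Δ => .semiComm _ _⟩
        | semiR t C₁ =>
            obtain ⟨rfl, h₁⟩ : a = t ∧ b = C₁.fill (.fm φ) := by
              simpa [Ctx.fill, eq_comm] using hx
            exact ⟨.semiL C₁ a, by simp [Ctx.fill, h₁], fun Δ => .semiComm _ _⟩
        | commaL C₁ t => simp [Ctx.fill] at hx
        | commaR t C₁ => simp [Ctx.fill] at hx
      · intro C φ hx
        cases C with
        | hole => exact absurd hx (by simp [Ctx.fill])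
        | semiL C₁ t =>
            obtain ⟨h₁, rfl⟩ : b = C₁.fill (.fm φ) ∧ a = t := by
              simpa [Ctx.fill, eq_comm] using hx
            exact ⟨.semiR a C₁, by simp [Ctx.fill, h₁], fun Δ => .semiComm _ _⟩
        | semiR t C₁ =>
            obtain ⟨rfl, h₁⟩ : b = t ∧ a = C₁.fill (.fm φ) := by
              simpa [Ctx.fill, eq_comm] using hx
            exact ⟨.semiL C₁ b, by simp [Ctx.fill, h₁], fun Δ => .semiComm _ _⟩
        | commaL C₁ t => simp [Ctx.fill] at hx
        | commaR t C₁ => simp [Ctx.fill] at hx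
  | commaComm a b =>
      constructor
      · intro C φ hx
        cases C with
        | hole => exact absurd hx (by simp [Ctx.fill])
        | commaL C₁ t =>
            obtain ⟨h₁, rfl⟩ : a = C₁.fill (.fm φ) ∧ b = t := by
              simpa [Ctx.fill, eq_comm] using hx
            exact ⟨.commaR b C₁, by simp [Ctx.fill, h₁], fun Δ => .commaComm _ _⟩
        | commaR t C₁ =>
            obtain ⟨rfl, h₁⟩ : a = t ∧ b = C₁.fill (.fm φ) := by
              simpa [Ctx.fill, eq_comm] using hx
            exact ⟨.commaL C₁ a, by simp [Ctx.fill, h₁], fun Δ => .commaComm _ _⟩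
        | semiL C₁ t => simp [Ctx.fill] at hx
        | semiR t C₁ => simp [Ctx.fill] at hx
      · intro C φ hx
        cases C with
        | hole => exact absurd hx (by simp [Ctx.fill])
        | commaL C₁ t =>
            obtain ⟨h₁, rfl⟩ : b = C₁.fill (.fm φ) ∧ a = t := by
              simpa [Ctx.fill, eq_comm] using hx
            exact ⟨.commaR a C₁, by simp [Ctx.fill, h₁], fun Δ => .commaComm _ _⟩
        | commaR t C₁ =>
            obtain ⟨rfl, h₁⟩ : b = t ∧ a = C₁.fill (.fm φ) := by
              simpa [Ctx.fill, eq_comm] using hx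
            exact ⟨.commaL C₁ b, by simp [Ctx.fill, h₁], fun Δ => .commaComm _ _⟩
        | semiL C₁ t => simp [Ctx.fill] at hx
        | semiR t C₁ => simp [Ctx.fill] at hx
  | semiAssoc a b c =>
      constructor
      · intro C φ hx
        cases C with
        | hole => exact absurd hx (by simp [Ctx.fill])
        | semiL C₁ t =>
            obtain ⟨h₁, rfl⟩ : Bunch.semi a b = C₁.fill (.fm φ) ∧ c = t := by
              simpa [Ctx.fill, eq_comm] using hx
            cases C₁ with
            | hole => exact absurd h₁ (by simp [Ctx.fill])
            | semiL C₂ t' =>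
                obtain ⟨h₂, rfl⟩ : a = C₂.fill (.fm φ) ∧ b = t' := by
                  simpa [Ctx.fill, eq_comm] using h₁
                exact ⟨.semiL C₂ (.semi b c), by simp [Ctx.fill, h₂],
                  fun Δ => .semiAssoc _ _ _⟩
            | semiR t' C₂ =>
                obtain ⟨rfl, h₂⟩ : a = t' ∧ b = C₂.fill (.fm φ) := by
                  simpa [Ctx.fill, eq_comm] using h₁
                exact ⟨.semiR a (.semiL C₂ c), by simp [Ctx.fill, h₂],
                  fun Δ => .semiAssoc _ _ _⟩
            | commaL C₂ t' => simp [Ctx.fill] at h₁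
            | commaR t' C₂ => simp [Ctx.fill] at h₁
        | semiR t C₁ =>
            obtain ⟨rfl, h₁⟩ : Bunch.semi a b = t ∧ c = C₁.fill (.fm φ) := by
              simpa [Ctx.fill, eq_comm] using hx
            exact ⟨.semiR a (.semiR b C₁), by simp [Ctx.fill, h₁],
              fun Δ => .semiAssoc _ _ _⟩
        | commaL C₁ t => simp [Ctx.fill] at hx
        | commaR t C₁ => simp [Ctx.fill] at hx
      · intro C φ hx
        cases C with
        | hole => exact absurd hx (by simp [Ctx.fill])
        | semiL C₁ t =>
            obtain ⟨h₁, rfl⟩ : a = C₁.fill (.fm φ) ∧ Bunch.semi b c = t := by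
              simpa [Ctx.fill, eq_comm] using hx
            exact ⟨.semiL (.semiL C₁ b) c, by simp [Ctx.fill, h₁],
              fun Δ => .symm (.semiAssoc _ _ _)⟩
        | semiR t C₁ =>
            obtain ⟨rfl, h₁⟩ : a = t ∧ Bunch.semi b c = C₁.fill (.fm φ) := by
              simpa [Ctx.fill, eq_comm] using hx
            cases C₁ with
            | hole => exact absurd h₁ (by simp [Ctx.fill])
            | semiL C₂ t' =>
                obtain ⟨h₂, rfl⟩ : b = C₂.fill (.fm φ) ∧ c = t' := by
                  simpa [Ctx.fill, eq_comm] using h₁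
                exact ⟨.semiL (.semiR a C₂) c, by simp [Ctx.fill, h₂],
                  fun Δ => .symm (.semiAssoc _ _ _)⟩
            | semiR t' C₂ =>
                obtain ⟨rfl, h₂⟩ : b = t' ∧ c = C₂.fill (.fm φ) := by
                  simpa [Ctx.fill, eq_comm] using h₁
                exact ⟨.semiR (.semi a b) C₂, by simp [Ctx.fill, h₂],
                  fun Δ => .symm (.semiAssoc _ _ _)⟩
            | commaL C₂ t' => simp [Ctx.fill] at h₁
            | commaR t' C₂ => simp [Ctx.fill] at h₁
        | commaL C₁ t => simp [Ctx.fill] at hx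
        | commaR t C₁ => simp [Ctx.fill] at hx
  | commaAssoc a b c =>
      constructor
      · intro C φ hx
        cases C with
        | hole => exact absurd hx (by simp [Ctx.fill])
        | commaL C₁ t =>
            obtain ⟨h₁, rfl⟩ : Bunch.comma a b = C₁.fill (.fm φ) ∧ c = t := by
              simpa [Ctx.fill, eq_comm] using hx
            cases C₁ with
            | hole => exact absurd h₁ (by simp [Ctx.fill])
            | commaL C₂ t' =>
                obtain ⟨h₂, rfl⟩ : a = C₂.fill (.fm φ) ∧ b = t' := by
                  simpa [Ctx.fill, eq_comm] using h₁
                exact ⟨.commaL C₂ (.comma b c), by simp [Ctx.fill, h₂],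
                  fun Δ => .commaAssoc _ _ _⟩
            | commaR t' C₂ =>
                obtain ⟨rfl, h₂⟩ : a = t' ∧ b = C₂.fill (.fm φ) := by
                  simpa [Ctx.fill, eq_comm] using h₁
                exact ⟨.commaR a (.commaL C₂ c), by simp [Ctx.fill, h₂],
                  fun Δ => .commaAssoc _ _ _⟩
            | semiL C₂ t' => simp [Ctx.fill] at h₁
            | semiR t' C₂ => simp [Ctx.fill] at h₁
        | commaR t C₁ =>
            obtain ⟨rfl, h₁⟩ : Bunch.comma a b = t ∧ c = C₁.fill (.fm φ) := by
              simpa [Ctx.fill, eq_comm] using hx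
            exact ⟨.commaR a (.commaR b C₁), by simp [Ctx.fill, h₁],
              fun Δ => .commaAssoc _ _ _⟩
        | semiL C₁ t => simp [Ctx.fill] at hx
        | semiR t C₁ => simp [Ctx.fill] at hx
      · intro C φ hx
        cases C with
        | hole => exact absurd hx (by simp [Ctx.fill])
        | commaL C₁ t =>
            obtain ⟨h₁, rfl⟩ : a = C₁.fill (.fm φ) ∧ Bunch.comma b c = t := by
              simpa [Ctx.fill, eq_comm] using hx
            exact ⟨.commaL (.commaL C₁ b) c, by simp [Ctx.fill, h₁],
              fun Δ => .symm (.commaAssoc _ _ _)⟩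
        | commaR t C₁ =>
            obtain ⟨rfl, h₁⟩ : a = t ∧ Bunch.comma b c = C₁.fill (.fm φ) := by
              simpa [Ctx.fill, eq_comm] using hx
            cases C₁ with
            | hole => exact absurd h₁ (by simp [Ctx.fill])
            | commaL C₂ t' =>
                obtain ⟨h₂, rfl⟩ : b = C₂.fill (.fm φ) ∧ c = t' := by
                  simpa [Ctx.fill, eq_comm] using h₁
                exact ⟨.commaL (.commaR a C₂) c, by simp [Ctx.fill, h₂],
                  fun Δ => .symm (.commaAssoc _ _ _)⟩
            | commaR t' C₂ =>
                obtain ⟨rfl, h₂⟩ : b = t' ∧ c = C₂.fill (.fm φ) := by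
                  simpa [Ctx.fill, eq_comm] using h₁
                exact ⟨.commaR (.comma a b) C₂, by simp [Ctx.fill, h₂],
                  fun Δ => .symm (.commaAssoc _ _ _)⟩
            | semiL C₂ t' => simp [Ctx.fill] at h₁
            | semiR t' C₂ => simp [Ctx.fill] at h₁
        | semiL C₁ t => simp [Ctx.fill] at hx
        | semiR t C₁ => simp [Ctx.fill] at hx
  | semiCongr h₁ h₂ ih₁ ih₂ =>
      rename_i a a' b b'
      constructor
      · intro C φ hx
        cases C with
        | hole => exact absurd hx (by simp [Ctx.fill])
        | semiL C₁ t =>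
            obtain ⟨hc, rfl⟩ : a = C₁.fill (.fm φ) ∧ b = t := by
              simpa [Ctx.fill, eq_comm] using hx
            rcases ih₁.1 C₁ φ hc with ⟨C₂, he, p⟩
            exact ⟨.semiL C₂ b', by simp [Ctx.fill, he],
              fun Δ => .semiCongr (p Δ) h₂⟩
        | semiR t C₁ =>
            obtain ⟨rfl, hc⟩ : a = t ∧ b = C₁.fill (.fm φ) := by
              simpa [Ctx.fill, eq_comm] using hx
            rcases ih₂.1 C₁ φ hc with ⟨C₂, he, p⟩
            exact ⟨.semiR a' C₂, by simp [Ctx.fill, he],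
              fun Δ => .semiCongr h₁ (p Δ)⟩
        | commaL C₁ t => simp [Ctx.fill] at hx
        | commaR t C₁ => simp [Ctx.fill] at hx
      · intro C φ hx
        cases C with
        | hole => exact absurd hx (by simp [Ctx.fill])
        | semiL C₁ t =>
            obtain ⟨hc, rfl⟩ : a' = C₁.fill (.fm φ) ∧ b' = t := by
              simpa [Ctx.fill, eq_comm] using hx
            rcases ih₁.2 C₁ φ hc with ⟨C₂, he, p⟩
            exact ⟨.semiL C₂ b, by simp [Ctx.fill, he],
              fun Δ => .semiCongr (p Δ) h₂.symm⟩
        | semiR t C₁ =>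
            obtain ⟨rfl, hc⟩ : a' = t ∧ b' = C₁.fill (.fm φ) := by
              simpa [Ctx.fill, eq_comm] using hx
            rcases ih₂.2 C₁ φ hc with ⟨C₂, he, p⟩
            exact ⟨.semiR a C₂, by simp [Ctx.fill, he],
              fun Δ => .semiCongr h₁.symm (p Δ)⟩
        | commaL C₁ t => simp [Ctx.fill] at hx
        | commaR t C₁ => simp [Ctx.fill] at hx
  | commaCongr h₁ h₂ ih₁ ih₂ =>
      rename_i a a' b b'
      constructor
      · intro C φ hx
        cases C with
        | hole => exact absurd hx (by simp [Ctx.fill])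
        | commaL C₁ t =>
            obtain ⟨hc, rfl⟩ : a = C₁.fill (.fm φ) ∧ b = t := by
              simpa [Ctx.fill, eq_comm] using hx
            rcases ih₁.1 C₁ φ hc with ⟨C₂, he, p⟩
            exact ⟨.commaL C₂ b', by simp [Ctx.fill, he],
              fun Δ => .commaCongr (p Δ) h₂⟩
        | commaR t C₁ =>
            obtain ⟨rfl, hc⟩ : a = t ∧ b = C₁.fill (.fm φ) := by
              simpa [Ctx.fill, eq_comm] using hx
            rcases ih₂.1 C₁ φ hc with ⟨C₂, he, p⟩
            exact ⟨.commaR a' C₂, by simp [Ctx.fill, he],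
              fun Δ => .commaCongr h₁ (p Δ)⟩
        | semiL C₁ t => simp [Ctx.fill] at hx
        | semiR t C₁ => simp [Ctx.fill] at hx
      · intro C φ hx
        cases C with
        | hole => exact absurd hx (by simp [Ctx.fill])
        | commaL C₁ t =>
            obtain ⟨hc, rfl⟩ : a' = C₁.fill (.fm φ) ∧ b' = t := by
              simpa [Ctx.fill, eq_comm] using hx
            rcases ih₁.2 C₁ φ hc with ⟨C₂, he, p⟩
            exact ⟨.commaL C₂ b, by simp [Ctx.fill, he],
              fun Δ => .commaCongr (p Δ) h₂.symm⟩
        | commaR t C₁ =>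
            obtain ⟨rfl, hc⟩ : a' = t ∧ b' = C₁.fill (.fm φ) := by
              simpa [Ctx.fill, eq_comm] using hx
            rcases ih₂.2 C₁ φ hc with ⟨C₂, he, p⟩
            exact ⟨.commaR a C₂, by simp [Ctx.fill, he],
              fun Δ => .commaCongr h₁.symm (p Δ)⟩
        | semiL C₁ t => simp [Ctx.fill] at hx
        | semiR t C₁ => simp [Ctx.fill] at hx

theorem fmTrack {x y : Bunch} (h : BunchEq x y) :
    ∀ (C : Ctx) (φ : BI), x = C.fill (.fm φ) →
      ∃ C₂, y = Ctx.fill C₂ (.fm φ) ∧ ∀ Δ, BunchEq (C.fill Δ) (Ctx.fill C₂ Δ) :=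
  (fmTrack2 h).1

/-- Top additive-cluster membership. -/
def memA (φ : BI) : Bunch → Prop
  | .fm ψ => ψ = φ
  | .semi a b => memA φ a ∨ memA φ b
  | .comma _ _ => False

theorem memA_eq {x y : Bunch} (h : BunchEq x y) (φ : BI) : memA φ x ↔ memA φ y := by
  induction h <;> simp [memA, *] <;> tauto

theorem locate {φ : BI} : ∀ (Θ : Bunch), memA φ Θ →
    ∃ C : Ctx, Θ = C.fill (.fm φ) ∧ ∀ X, ∃ Γu, BunchEq (C.fill X) (osemi Γu X) := by
  intro Θ h
  induction Θ with
  | fm ψ =>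
      cases h
      exact ⟨.hole, rfl, fun X => ⟨none, .refl _⟩⟩
  | semi a b iha ihb =>
      rcases h with ha | hb
      · rcases iha ha with ⟨Ca, rfl, prop⟩
        refine ⟨.semiL Ca b, rfl, fun X => ?_⟩
        rcases prop X with ⟨Γu, e⟩
        cases Γu with
        | none =>
            exact ⟨some b, .trans (.semiCongr e (.refl b)) (.semiComm X b)⟩
        | some g =>
            exact ⟨some (.semi g b), .trans (.semiCongr e (.refl b))
              (.trans (.trans (.semiAssoc g X b) (.semiCongr (.refl g) (.semiComm X b)))
                (.symm (.semiAssoc g b X)))⟩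
      · rcases ihb hb with ⟨Cb, rfl, prop⟩
        refine ⟨.semiR a Cb, rfl, fun X => ?_⟩
        rcases prop X with ⟨Γu, e⟩
        cases Γu with
        | none => exact ⟨some a, .semiCongr (.refl a) e⟩
        | some g =>
            exact ⟨some (.semi a g), .trans (.semiCongr (.refl a) e)
              (.symm (.semiAssoc a g X))⟩
  | comma a b _ _ => cases h

/-- The designated occurrence provided by an essence. -/
theorem essOcc {Γt : Option Bunch} {φ : BI} {Θ : Bunch}
    (h : Essence (osemi Γt (.fm φ)) Θ) :
    ∃ C : Ctx, Θ = C.fill (.fm φ) ∧ ∀ X, ∃ Γu, Essence (osemi Γu X) (C.fill X) := by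
  induction h with
  | ofEq h =>
      have hm : memA φ (osemi Γt (.fm φ)) := by
        cases Γt with
        | none => rfl
        | some g => exact Or.inr rfl
      have hm2 : memA φ _ := (memA_eq h φ).1 hm
      rcases locate _ hm2 with ⟨C, rfl, prop⟩
      refine ⟨C, rfl, fun X => ?_⟩
      rcases prop X with ⟨Γu, e⟩
      exact ⟨Γu, .ofEq e.symm⟩
  | insert C₀ Γ' Δo prem ih =>
      rcases ih with ⟨C₁, hpos, prop⟩
      rcases split C₁ (.fm φ) C₀ Γ' hpos.symm with
        ⟨C₂, rfl, hδ⟩ | ⟨D₀, rfl, hP⟩ | ⟨Pf, Qf, hPQ, rfl, rfl⟩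
      · obtain ⟨rfl, hg⟩ := fill_eq_fm hδ.symm
        subst hg
        rw [comp_hole]
        refine ⟨C₁.comp (.commaL .hole (mte Δo)), by rw [comp_fill]; rfl, fun X => ?_⟩
        rcases prop X with ⟨Γu, e⟩
        have := Essence.insert C₁ X Δo e
        rw [comp_fill]
        exact ⟨Γu, this⟩
      · refine ⟨C₀.comp (.commaL D₀ (mte Δo)), by rw [comp_fill]; simp [Ctx.fill, hP], fun X => ?_⟩
        rcases prop X with ⟨Γu, e⟩
        rw [comp_fill] at e ⊢
        exact ⟨Γu, Essence.insert C₀ (D₀.fill X) Δo e⟩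
      · refine ⟨Qf (.comma Γ' (mte Δo)), hPQ _ _, fun X => ?_⟩
        rcases prop X with ⟨Γu, e⟩
        rw [← hPQ] at e
        have := Essence.insert (Pf X) Γ' Δo e
        rw [hPQ] at this
        exact ⟨Γu, this⟩
  | insertSemi C₀ Γ' Γ'' Δo prem ih =>
      rcases ih with ⟨C₁, hpos, prop⟩
      rcases split C₁ (.fm φ) C₀ (.semi Γ' Γ'') hpos.symm with
        ⟨C₂, rfl, hδ⟩ | ⟨D₀, rfl, hP⟩ | ⟨Pf, Qf, hPQ, rfl, rfl⟩
      · obtain ⟨rfl, hg⟩ := fill_eq_fm hδ.symm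
        exact absurd hg (by simp)
      · cases D₀ with
        | hole => exact absurd hP (by simp [Ctx.fill])
        | semiL D₁ t =>
            obtain ⟨hg, rfl⟩ : Γ' = D₁.fill (.fm φ) ∧ Γ'' = t := by
              simpa [Ctx.fill] using hP
            refine ⟨C₀.comp (.semiL (.commaL D₁ (mte Δo)) Γ''),
              by rw [comp_fill]; simp [Ctx.fill, hg], fun X => ?_⟩
            rcases prop X with ⟨Γu, e⟩
            rw [comp_fill] at e ⊢
            simp only [Ctx.fill] at e ⊢
            exact ⟨Γu, Essence.insertSemi C₀ (D₁.fill X) Γ'' Δo e⟩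
        | semiR t D₁ =>
            obtain ⟨rfl, hg⟩ : Γ' = t ∧ Γ'' = D₁.fill (.fm φ) := by
              simpa [Ctx.fill] using hP
            refine ⟨C₀.comp (.semiR (.comma Γ' (mte Δo)) D₁),
              by rw [comp_fill]; simp [Ctx.fill, hg], fun X => ?_⟩
            rcases prop X with ⟨Γu, e⟩
            rw [comp_fill] at e ⊢
            simp only [Ctx.fill] at e ⊢
            exact ⟨Γu, Essence.insertSemi C₀ Γ' (D₁.fill X) Δo e⟩
        | commaL D₁ t => exact absurd hP (by simp [Ctx.fill])
        | commaR t D₁ => exact absurd hP (by simp [Ctx.fill])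
      · refine ⟨Qf (.semi (.comma Γ' (mte Δo)) Γ''), hPQ _ _, fun X => ?_⟩
        rcases prop X with ⟨Γu, e⟩
        rw [← hPQ] at e
        have := Essence.insertSemi (Pf X) Γ' Γ'' Δo e
        rw [hPQ] at this
        exact ⟨Γu, this⟩
  | congr prem heq ih =>
      rcases ih with ⟨C₁, rfl, prop⟩
      rcases fmTrack heq C₁ φ rfl with ⟨C₂, hy, p⟩
      refine ⟨C₂, hy, fun X => ?_⟩
      rcases prop X with ⟨Γu, e⟩
      exact ⟨Γu, .congr e (p X)⟩

/-! ### Flattening -/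

def sflat : Bunch → List Bunch
  | .semi a b => sflat a ++ sflat b
  | x => [x]

def cflat : Bunch → List Bunch
  | .comma a b => cflat a ++ cflat b
  | x => [x]

def sfold : List Bunch → Bunch
  | [] => .fm .mtop
  | [a] => a
  | a :: l => .semi a (sfold l)

def cfold : List Bunch → Bunch
  | [] => .fm .mtop
  | [a] => a
  | a :: l => .comma a (cfold l)

theorem sflat_ne_nil (x : Bunch) : sflat x ≠ [] := by
  induction x <;> simp [sflat] <;> simp_all

theorem cflat_ne_nil (x : Bunch) : cflat x ≠ [] := by
  induction x <;> simp [cflat] <;> simp_all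

theorem sfold_cons {a : Bunch} {l : List Bunch} (h : l ≠ []) :
    sfold (a :: l) = .semi a (sfold l) := by
  cases l with
  | nil => exact absurd rfl h
  | cons b t => rfl

theorem cfold_cons {a : Bunch} {l : List Bunch} (h : l ≠ []) :
    cfold (a :: l) = .comma a (cfold l) := by
  cases l with
  | nil => exact absurd rfl h
  | cons b t => rfl

theorem sfold_append {l₁ l₂ : List Bunch} (h₁ : l₁ ≠ []) (h₂ : l₂ ≠ []) :
    BunchEq (sfold (l₁ ++ l₂)) (.semi (sfold l₁) (sfold l₂)) := by
  induction l₁ with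
  | nil => exact absurd rfl h₁
  | cons a t ih =>
      cases t with
      | nil =>
          rw [show ((a :: ([] : List Bunch)) ++ l₂) = a :: l₂ by simp, sfold_cons h₂]
          exact .refl _
      | cons b t' =>
          have ht : (b :: t' : List Bunch) ≠ [] := by simp
          have ih' := ih ht
          rw [List.cons_append, sfold_cons (l := (b :: t') ++ l₂) (by simp), sfold_cons ht]
          exact .trans (.semiCongr (.refl a) ih')
            (.symm (.semiAssoc a (sfold (b :: t')) (sfold l₂)))

theorem cfold_append {l₁ l₂ : List Bunch} (h₁ : l₁ ≠ []) (h₂ : l₂ ≠ []) :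
    BunchEq (cfold (l₁ ++ l₂)) (.comma (cfold l₁) (cfold l₂)) := by
  induction l₁ with
  | nil => exact absurd rfl h₁
  | cons a t ih =>
      cases t with
      | nil =>
          rw [show ((a :: ([] : List Bunch)) ++ l₂) = a :: l₂ by simp, cfold_cons h₂]
          exact .refl _
      | cons b t' =>
          have ht : (b :: t' : List Bunch) ≠ [] := by simp
          have ih' := ih ht
          rw [List.cons_append, cfold_cons (l := (b :: t') ++ l₂) (by simp), cfold_cons ht]
          exact .trans (.commaCongr (.refl a) ih')
            (.symm (.commaAssoc a (cfold (b :: t')) (cfold l₂)))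

theorem sfold_perm {l₁ l₂ : List Bunch} (h : l₁.Perm l₂) :
    BunchEq (sfold l₁) (sfold l₂) := by
  induction h with
  | nil => exact .refl _
  | cons x h ih =>
      rename_i t₁ t₂
      cases t₁ with
      | nil =>
          have : t₂ = [] := h.symm.eq_nil
          subst this; exact .refl _
      | cons c t =>
          have h₂ : t₂ ≠ [] := by
            intro e; subst e; exact absurd h.eq_nil (by simp)
          rw [sfold_cons (by simp), sfold_cons h₂]
          exact .semiCongr (.refl _) ih
  | swap x y l =>
      cases l with
      | nil => exact .semiComm y x
      | cons c t =>
          have e1 : sfold (y :: x :: c :: t) = .semi y (.semi x (sfold (c :: t))) := by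
            rw [sfold_cons (by simp), sfold_cons (by simp)]
          have e2 : sfold (x :: y :: c :: t) = .semi x (.semi y (sfold (c :: t))) := by
            rw [sfold_cons (by simp), sfold_cons (by simp)]
          rw [e1, e2]
          exact .trans (.symm (.semiAssoc y x (sfold (c :: t))))
            (.trans (.semiCongr (.semiComm y x) (.refl _)) (.semiAssoc x y (sfold (c :: t))))
  | trans _ _ ih₁ ih₂ => exact ih₁.trans ih₂

theorem cfold_perm {l₁ l₂ : List Bunch} (h : l₁.Perm l₂) :
    BunchEq (cfold l₁) (cfold l₂) := by
  induction h with
  | nil => exact .refl _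
  | cons x h ih =>
      rename_i t₁ t₂
      cases t₁ with
      | nil =>
          have : t₂ = [] := h.symm.eq_nil
          subst this; exact .refl _
      | cons c t =>
          have h₂ : t₂ ≠ [] := by
            intro e; subst e; exact absurd h.eq_nil (by simp)
          rw [cfold_cons (by simp), cfold_cons h₂]
          exact .commaCongr (.refl _) ih
  | swap x y l =>
      cases l with
      | nil => exact .commaComm y x
      | cons c t =>
          have e1 : cfold (y :: x :: c :: t) = .comma y (.comma x (cfold (c :: t))) := by
            rw [cfold_cons (by simp), cfold_cons (by simp)]
          have e2 : cfold (x :: y :: c :: t) = .comma x (.comma y (cfold (c :: t))) := by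
            rw [cfold_cons (by simp), cfold_cons (by simp)]
          rw [e1, e2]
          exact .trans (.symm (.commaAssoc y x (cfold (c :: t))))
            (.trans (.commaCongr (.commaComm y x) (.refl _)) (.commaAssoc x y (cfold (c :: t))))
  | trans _ _ ih₁ ih₂ => exact ih₁.trans ih₂

theorem sfold_f₂ {l₁ l₂ : List Bunch} (h : List.Forall₂ BunchEq l₁ l₂) :
    BunchEq (sfold l₁) (sfold l₂) := by
  induction h with
  | nil => exact .refl _
  | cons hab h ih =>
      rename_i a b t₁ t₂
      cases t₁ with
      | nil => cases h; exact hab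
      | cons c t =>
          have h₂ : t₂ ≠ [] := by intro e; subst e; cases h
          rw [sfold_cons (by simp), sfold_cons h₂]
          exact .semiCongr hab ih

theorem cfold_f₂ {l₁ l₂ : List Bunch} (h : List.Forall₂ BunchEq l₁ l₂) :
    BunchEq (cfold l₁) (cfold l₂) := by
  induction h with
  | nil => exact .refl _
  | cons hab h ih =>
      rename_i a b t₁ t₂
      cases t₁ with
      | nil => cases h; exact hab
      | cons c t =>
          have h₂ : t₂ ≠ [] := by intro e; subst e; cases h
          rw [cfold_cons (by simp), cfold_cons h₂]
          exact .commaCongr hab ih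

theorem sfold_f₂_wle {l₁ l₂ : List Bunch} (h : List.Forall₂ Wle l₁ l₂) :
    Wle (sfold l₁) (sfold l₂) := by
  induction h with
  | nil => exact .ofEq (.refl _)
  | cons hab h ih =>
      rename_i a b t₁ t₂
      cases t₁ with
      | nil => cases h; exact hab
      | cons c t =>
          have h₂ : t₂ ≠ [] := by intro e; subst e; cases h
          rw [sfold_cons (by simp), sfold_cons h₂]
          exact wlePairS hab ih

theorem cfold_f₂_wle {l₁ l₂ : List Bunch} (h : List.Forall₂ Wle l₁ l₂) :
    Wle (cfold l₁) (cfold l₂) := by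
  induction h with
  | nil => exact .ofEq (.refl _)
  | cons hab h ih =>
      rename_i a b t₁ t₂
      cases t₁ with
      | nil => cases h; exact hab
      | cons c t =>
          have h₂ : t₂ ≠ [] := by intro e; subst e; cases h
          rw [cfold_cons (by simp), cfold_cons h₂]
          exact wlePairC hab ih

theorem sfold_flat (x : Bunch) : BunchEq x (sfold (sflat x)) := by
  induction x with
  | fm A => exact .refl _
  | semi a b iha ihb =>
      exact .trans (.semiCongr iha ihb)
        (.symm (sfold_append (sflat_ne_nil a) (sflat_ne_nil b)))
  | comma a b _ _ => exact .refl _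

theorem cfold_flat (x : Bunch) : BunchEq x (cfold (cflat x)) := by
  induction x with
  | fm A => exact .refl _
  | comma a b iha ihb =>
      exact .trans (.commaCongr iha ihb)
        (.symm (cfold_append (cflat_ne_nil a) (cflat_ne_nil b)))
  | semi a b _ _ => exact .refl _

/-! ### List surgery -/

theorem f₂_perm_right {α β : Type} {R : α → β → Prop} {l : List α} {m m' : List β}
    (h : List.Forall₂ R l m) (p : m.Perm m') :
    ∃ l', l.Perm l' ∧ List.Forall₂ R l' m' := by
  induction p generalizing l with
  | nil => exact ⟨l, .refl _, h⟩
  | cons x p ih =>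
      rcases List.forall₂_cons_right_iff.1 h with ⟨a, l₀, hax, h₀, rfl⟩
      rcases ih h₀ with ⟨l', pl, f⟩
      exact ⟨a :: l', pl.cons a, List.Forall₂.cons hax f⟩
  | swap x y t =>
      rcases List.forall₂_cons_right_iff.1 h with ⟨a, l₁, hay, h₁, rfl⟩
      rcases List.forall₂_cons_right_iff.1 h₁ with ⟨b, l₀, hbx, h₀, rfl⟩
      exact ⟨b :: a :: l₀, .swap _ _ _, List.Forall₂.cons hbx (List.Forall₂.cons hay h₀)⟩
  | trans p₁ p₂ ih₁ ih₂ =>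
      rcases ih₁ h with ⟨l₁, pl₁, f₁⟩
      rcases ih₂ f₁ with ⟨l₂, pl₂, f₂⟩
      exact ⟨l₂, pl₁.trans pl₂, f₂⟩

theorem f₂_perm_left {α β : Type} {R : α → β → Prop} {l l' : List α} {m : List β}
    (p : l.Perm l') (h : List.Forall₂ R l m) :
    ∃ m', m.Perm m' ∧ List.Forall₂ R l' m' := by
  rcases f₂_perm_right h.flip p with ⟨m', pm, f⟩
  exact ⟨m', pm, f.flip⟩

theorem f₂_append_split {α β : Type} {R : α → β → Prop} {s : List α} {m₁ m₂ : List β}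
    (h : List.Forall₂ R s (m₁ ++ m₂)) :
    ∃ s₁ s₂, s = s₁ ++ s₂ ∧ List.Forall₂ R s₁ m₁ ∧ List.Forall₂ R s₂ m₂ := by
  induction m₁ generalizing s with
  | nil => exact ⟨[], s, rfl, .nil, h⟩
  | cons b t ih =>
      rcases List.forall₂_cons_right_iff.1 h with ⟨a, s₀, hab, h₀, rfl⟩
      rcases ih h₀ with ⟨s₁, s₂, rfl, f₁, f₂⟩
      exact ⟨a :: s₁, s₂, rfl, List.Forall₂.cons hab f₁, f₂⟩

theorem f₂_append_split_left {α β : Type} {R : α → β → Prop} {s₁ s₂ : List α} {m : List β}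
    (h : List.Forall₂ R (s₁ ++ s₂) m) :
    ∃ m₁ m₂, m = m₁ ++ m₂ ∧ List.Forall₂ R s₁ m₁ ∧ List.Forall₂ R s₂ m₂ := by
  induction s₁ generalizing m with
  | nil => exact ⟨[], m, rfl, .nil, h⟩
  | cons a t ih =>
      rcases List.forall₂_cons_left_iff.1 h with ⟨b, m₀, hab, h₀, rfl⟩
      rcases ih h₀ with ⟨m₁, m₂, rfl, f₁, f₂⟩
      exact ⟨b :: m₁, m₂, rfl, List.Forall₂.cons hab f₁, f₂⟩

theorem f₂_append {α β : Type} {R : α → β → Prop} {l₁ l₂ : List α} {m₁ m₂ : List β}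
    (h₁ : List.Forall₂ R l₁ m₁) (h₂ : List.Forall₂ R l₂ m₂) :
    List.Forall₂ R (l₁ ++ l₂) (m₁ ++ m₂) := by
  induction h₁ with
  | nil => exact h₂
  | cons hab _ ih => exact .cons hab ih

theorem f₂_comp {α β γ : Type} {R : α → β → Prop} {S : β → γ → Prop}
    {l : List α} {m : List β} {n : List γ}
    (h₁ : List.Forall₂ R l m) (h₂ : List.Forall₂ S m n) :
    List.Forall₂ (fun a c => ∃ b, R a b ∧ S b c) l n := by
  induction h₁ generalizing n with
  | nil => cases h₂; exact .nil
  | cons hab h ih =>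
      rcases List.forall₂_cons_left_iff.1 h₂ with ⟨c, n₀, hbc, h₀, rfl⟩
      exact List.Forall₂.cons ⟨_, hab, hbc⟩ (ih h₀)

theorem perm_split {α : Type} {A B L J : List α} (h : (A ++ B).Perm (L ++ J)) :
    ∃ LA LB JA JB, L.Perm (LA ++ LB) ∧ J.Perm (JA ++ JB) ∧
      A.Perm (LA ++ JA) ∧ B.Perm (LB ++ JB) := by
  induction A generalizing L J with
  | nil => exact ⟨[], L, [], J, .refl _, .refl _, .nil, h⟩
  | cons a A' ih =>
      have ha : a ∈ L ++ J := h.subset (by simp)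
      rcases List.mem_append.1 ha with haL | haJ
      · rcases List.append_of_mem haL with ⟨L₁, L₂, rfl⟩
        have hm : ((L₁ ++ a :: L₂) ++ J).Perm (a :: ((L₁ ++ L₂) ++ J)) := by
          have := List.perm_middle (a := a) (l₁ := L₁) (l₂ := L₂ ++ J)
          simpa [List.append_assoc] using this
        have h' : (A' ++ B).Perm ((L₁ ++ L₂) ++ J) := (h.trans hm).cons_inv
        rcases ih h' with ⟨LA, LB, JA, JB, pL, pJ, pA, pB⟩
        exact ⟨a :: LA, LB, JA, JB, List.perm_middle.trans (pL.cons a), pJ,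
          pA.cons a, pB⟩
      · rcases List.append_of_mem haJ with ⟨J₁, J₂, rfl⟩
        have hm : (L ++ (J₁ ++ a :: J₂)).Perm (a :: (L ++ (J₁ ++ J₂))) := by
          have := List.perm_middle (a := a) (l₁ := L ++ J₁) (l₂ := J₂)
          simpa [List.append_assoc] using this
        have h' : (A' ++ B).Perm (L ++ (J₁ ++ J₂)) := (h.trans hm).cons_inv
        rcases ih h' with ⟨LA, LB, JA, JB, pL, pJ, pA, pB⟩
        exact ⟨LA, LB, a :: JA, JB, pL, List.perm_middle.trans (pJ.cons a),
          (pA.cons a).trans List.perm_middle.symm, pB⟩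

theorem f₂_beq_refl (l : List Bunch) : List.Forall₂ BunchEq l l := by
  induction l with
  | nil => exact .nil
  | cons a t ih => exact .cons (.refl a) ih

theorem sflat_resp {x y : Bunch} (h : BunchEq x y) :
    ∃ l, (sflat x).Perm l ∧ List.Forall₂ BunchEq l (sflat y) := by
  induction h with
  | refl x => exact ⟨sflat x, .refl _, f₂_beq_refl _⟩
  | symm h ih =>
      rcases ih with ⟨l, p, f⟩
      have f' : List.Forall₂ BunchEq _ l := (f.flip).imp (fun _ _ h => BunchEq.symm h)

      rcases f₂_perm_right f' p.symm with ⟨l', p', f''⟩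
      exact ⟨l', p', f''⟩
  | trans h₁ h₂ ih₁ ih₂ =>
      rcases ih₁ with ⟨l₁, p₁, f₁⟩
      rcases ih₂ with ⟨l₂, p₂, f₂⟩
      rcases f₂_perm_right f₁ p₂ with ⟨l₁', p₁', f₁'⟩
      exact ⟨l₁', p₁.trans p₁',
        (f₂_comp f₁' f₂).imp (fun _ _ h => let ⟨_, h₁, h₂⟩ := h; h₁.trans h₂)⟩
  | semiComm a b =>
      exact ⟨sflat b ++ sflat a, List.perm_append_comm, f₂_beq_refl _⟩
  | semiAssoc a b c =>
      refine ⟨sflat a ++ (sflat b ++ sflat c), ?_, f₂_beq_refl _⟩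
      show (sflat a ++ sflat b ++ sflat c).Perm _
      rw [List.append_assoc]
  | commaComm a b => exact ⟨[.comma a b], .refl _, .cons (.commaComm a b) .nil⟩
  | commaAssoc a b c => exact ⟨[.comma (.comma a b) c], .refl _, .cons (.commaAssoc a b c) .nil⟩
  | semiCongr h₁ h₂ ih₁ ih₂ =>
      rcases ih₁ with ⟨l₁, p₁, f₁⟩
      rcases ih₂ with ⟨l₂, p₂, f₂⟩
      exact ⟨l₁ ++ l₂, p₁.append p₂, f₂_append f₁ f₂⟩
  | commaCongr h₁ h₂ =>
      exact ⟨[.comma _ _], .refl _, .cons (.commaCongr h₁ h₂) .nil⟩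

theorem cflat_resp {x y : Bunch} (h : BunchEq x y) :
    ∃ l, (cflat x).Perm l ∧ List.Forall₂ BunchEq l (cflat y) := by
  induction h with
  | refl x => exact ⟨cflat x, .refl _, f₂_beq_refl _⟩
  | symm h ih =>
      rcases ih with ⟨l, p, f⟩
      have f' : List.Forall₂ BunchEq _ l := (f.flip).imp (fun _ _ h => BunchEq.symm h)

      rcases f₂_perm_right f' p.symm with ⟨l', p', f''⟩
      exact ⟨l', p', f''⟩
  | trans h₁ h₂ ih₁ ih₂ =>
      rcases ih₁ with ⟨l₁, p₁, f₁⟩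
      rcases ih₂ with ⟨l₂, p₂, f₂⟩
      rcases f₂_perm_right f₁ p₂ with ⟨l₁', p₁', f₁'⟩
      exact ⟨l₁', p₁.trans p₁',
        (f₂_comp f₁' f₂).imp (fun _ _ h => let ⟨_, h₁, h₂⟩ := h; h₁.trans h₂)⟩
  | commaComm a b =>
      exact ⟨cflat b ++ cflat a, List.perm_append_comm, f₂_beq_refl _⟩
  | commaAssoc a b c =>
      refine ⟨cflat a ++ (cflat b ++ cflat c), ?_, f₂_beq_refl _⟩
      show (cflat a ++ cflat b ++ cflat c).Perm _
      rw [List.append_assoc]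
  | semiComm a b => exact ⟨[.semi a b], .refl _, .cons (.semiComm a b) .nil⟩
  | semiAssoc a b c => exact ⟨[.semi (.semi a b) c], .refl _, .cons (.semiAssoc a b c) .nil⟩
  | commaCongr h₁ h₂ ih₁ ih₂ =>
      rcases ih₁ with ⟨l₁, p₁, f₁⟩
      rcases ih₂ with ⟨l₂, p₂, f₂⟩
      exact ⟨l₁ ++ l₂, p₁.append p₂, f₂_append f₁ f₂⟩
  | semiCongr h₁ h₂ =>
      exact ⟨[.semi _ _], .refl _, .cons (.semiCongr h₁ h₂) .nil⟩

/-! ### Flat characterisations of weakening -/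

theorem f₂_wle_refl (l : List Bunch) : List.Forall₂ Wle l l := by
  induction l with
  | nil => exact .nil
  | cons a t ih => exact .cons (.ofEq (.refl a)) ih

theorem wleFL_weak : ∀ (C : Ctx) (Δ J : Bunch),
    ∃ l junk, List.Forall₂ Wle (sflat (C.fill Δ)) l ∧
      (sflat (C.fill (.semi Δ J))).Perm (l ++ junk) := by
  intro C
  induction C with
  | hole =>
      intro Δ J
      exact ⟨sflat Δ, sflat J, f₂_wle_refl _, .refl _⟩
  | semiL C₂ t ih =>
      intro Δ J
      obtain ⟨l, junk, f, p⟩ := ih Δ J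
      refine ⟨l ++ sflat t, junk, f₂_append f (f₂_wle_refl _), ?_⟩
      show (sflat (C₂.fill (.semi Δ J)) ++ sflat t).Perm _
      have h1 : (sflat (C₂.fill (.semi Δ J)) ++ sflat t).Perm ((l ++ junk) ++ sflat t) :=
        p.append_right _
      refine h1.trans ?_
      have : ((l ++ junk) ++ sflat t).Perm (l ++ (junk ++ sflat t)) := by
        rw [List.append_assoc]
      refine this.trans ?_
      have : (junk ++ sflat t).Perm (sflat t ++ junk) := List.perm_append_comm
      have := List.Perm.append_left l this
      refine this.trans ?_
      rw [List.append_assoc]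
  | semiR t C₂ ih =>
      intro Δ J
      obtain ⟨l, junk, f, p⟩ := ih Δ J
      refine ⟨sflat t ++ l, junk, f₂_append (f₂_wle_refl _) f, ?_⟩
      show (sflat t ++ sflat (C₂.fill (.semi Δ J))).Perm _
      have h1 : (sflat t ++ sflat (C₂.fill (.semi Δ J))).Perm (sflat t ++ (l ++ junk)) :=
        List.Perm.append_left _ p
      refine h1.trans ?_
      rw [List.append_assoc]
  | commaL C₂ t ih =>
      intro Δ J
      exact ⟨[.comma (C₂.fill (.semi Δ J)) t], [],
        .cons (Wle.weak (.commaL C₂ t) Δ J) .nil, by simp [sflat, Ctx.fill]⟩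
  | commaR t C₂ ih =>
      intro Δ J
      exact ⟨[.comma t (C₂.fill (.semi Δ J))], [],
        .cons (Wle.weak (.commaR t C₂) Δ J) .nil, by simp [sflat, Ctx.fill]⟩

/-- Semi-level flat characterisation of `Wle`. -/
theorem wleFL {u w : Bunch} (h : Wle u w) :
    ∃ l junk, List.Forall₂ Wle (sflat u) l ∧ (sflat w).Perm (l ++ junk) := by
  induction h with
  | ofEq h =>
      rcases sflat_resp h with ⟨l, p, f⟩
      have f' : List.Forall₂ BunchEq _ l := (f.flip).imp (fun _ _ h => BunchEq.symm h)
      rcases f₂_perm_right f' p.symm with ⟨w', pw, fw⟩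
      refine ⟨w', [], (fw.flip).imp (fun _ _ h => Wle.ofEq h.symm), by simpa using pw⟩
  | weak C Δ J => exact wleFL_weak C Δ J
  | trans h₁ h₂ ih₁ ih₂ =>
      obtain ⟨l₁, j₁, f₁, p₁⟩ := ih₁
      obtain ⟨l₂, j₂, f₂, p₂⟩ := ih₂
      obtain ⟨l₂', pl₂, f₂'⟩ := f₂_perm_left p₁ f₂
      obtain ⟨A, B, rfl, fA, fB⟩ := f₂_append_split_left f₂'
      refine ⟨A, B ++ j₂,
        (f₂_comp f₁ fA).imp (fun _ _ h => let ⟨_, ha, hb⟩ := h; ha.trans hb), ?_⟩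
      refine p₂.trans ?_
      have := pl₂.append_right j₂
      refine this.trans ?_
      rw [List.append_assoc]

theorem flatten_singletons (l : List Bunch) :
    (l.map (fun d => [d])).flatten = l := by
  induction l <;> simp [*]

theorem flatten_ne_nil {H : List (List Bunch)} (h₀ : H ≠ [])
    (h : ∀ S ∈ H, S ≠ []) : H.flatten ≠ [] := by
  cases H with
  | nil => exact absurd rfl h₀
  | cons S t =>
      have := h S (by simp)
      cases S with
      | nil => exact absurd rfl this
      | cons a r => simp

theorem cfold_flatten {H : List (List Bunch)} (h : ∀ S ∈ H, S ≠ []) :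
    BunchEq (cfold H.flatten) (cfold (H.map cfold)) := by
  induction H with
  | nil => exact .refl _
  | cons S t ih =>
      cases t with
      | nil => simp
              ; exact .refl _
      | cons S' t' =>
          have hS : S ≠ [] := h S (by simp)
          have ht : ∀ T ∈ (S' :: t'), T ≠ [] := fun T hT => h T (by simp [hT])
          have hfl : (S' :: t').flatten ≠ [] :=
            flatten_ne_nil (by simp) ht
          have e1 : (List.flatten (S :: S' :: t')) = S ++ (S' :: t').flatten := by simp
          rw [e1]
          refine (cfold_append hS hfl).trans ?_
          refine (BunchEq.commaCongr (.refl _) (ih ht)).trans ?_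
          rw [show (S :: S' :: t').map cfold = cfold S :: (S' :: t').map cfold from rfl,
            cfold_cons (by simp)]
          exact .refl _

theorem flatten_map_flatten {α : Type} (H : List (List (List α))) :
    (H.map List.flatten).flatten = H.flatten.flatten := by
  induction H with
  | nil => rfl
  | cons a t ih => simp [ih]

theorem f₂_flatten_split {α β : Type} {R : α → β → Prop} :
    ∀ {L : List (List β)} {s : List α}, List.Forall₂ R s L.flatten →
    ∃ H : List (List α), s = H.flatten ∧ List.Forall₂ (List.Forall₂ R) H L := by
  intro L
  induction L with
  | nil =>
      intro s h
      cases h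
      exact ⟨[], by simp, .nil⟩
  | cons l t ih =>
      intro s h
      rw [show (l :: t).flatten = l ++ t.flatten from by simp] at h
      obtain ⟨s₁, s₂, rfl, f₁, f₂⟩ := f₂_append_split h
      obtain ⟨H, rfl, fH⟩ := ih f₂
      exact ⟨s₁ :: H, by simp, .cons f₁ fH⟩

theorem perm_flatten {α : Type} {L L' : List (List α)} (p : L.Perm L') :
    L.flatten.Perm L'.flatten := by
  induction p with
  | nil => exact .refl _
  | cons x _ ih => simpa using ih.append_left x
  | swap x y l =>
      show (y ++ (x ++ l.flatten)).Perm (x ++ (y ++ l.flatten))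
      have h1 : (y ++ (x ++ l.flatten)) = ((y ++ x) ++ l.flatten) := by
        rw [List.append_assoc]
      have h2 : (x ++ (y ++ l.flatten)) = ((x ++ y) ++ l.flatten) := by
        rw [List.append_assoc]
      rw [h1, h2]
      exact List.perm_append_comm.append_right _
  | trans _ _ ih₁ ih₂ => exact ih₁.trans ih₂

theorem f₂_map_left {α β γ : Type} {R : α → γ → Prop} (g : β → α) {l : List β} {m : List γ}
    (h : List.Forall₂ (fun b c => R (g b) c) l m) :
    List.Forall₂ R (l.map g) m := by
  induction h with
  | nil => exact .nil
  | cons hab _ ih => exact .cons hab ih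

/-- group relation for comma-level characterisation -/
def GRel (S : List Bunch) (d : Bunch) : Prop := S ≠ [] ∧ Wle (cfold S) d

theorem f₂_grel_ne {G : List (List Bunch)} {m : List Bunch}
    (f : List.Forall₂ GRel G m) : ∀ S ∈ G, S ≠ [] := by
  induction f with
  | nil => intro S hS; cases hS
  | cons hab _ ih =>
      intro S hS
      rcases List.mem_cons.mp hS with rfl | h
      · exact hab.1
      · exact ih S h

theorem f₂_grel_refl (l : List Bunch) :
    List.Forall₂ GRel (l.map (fun d => [d])) l := by
  induction l with
  | nil => exact .nil
  | cons a t ih => exact .cons ⟨by simp, .ofEq (.refl a)⟩ ih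

theorem wleCF_weak : ∀ (C : Ctx) (Δ J : Bunch),
    ∃ G : List (List Bunch), (cflat (C.fill Δ)).Perm G.flatten ∧
      List.Forall₂ GRel G (cflat (C.fill (.semi Δ J))) := by
  intro C
  induction C with
  | hole =>
      intro Δ J
      refine ⟨[cflat Δ], by simp [Ctx.fill], .cons ⟨cflat_ne_nil Δ, ?_⟩ .nil⟩
      exact (Wle.ofEq (cfold_flat Δ).symm).trans (Wle.weak .hole Δ J)
  | semiL C₂ t ih =>
      intro Δ J
      refine ⟨[cflat (.semi (C₂.fill Δ) t)], by simp [Ctx.fill], .cons ⟨by simp [cflat], ?_⟩ .nil⟩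
      exact (Wle.ofEq (cfold_flat _).symm).trans (Wle.weak (.semiL C₂ t) Δ J)
  | semiR t C₂ ih =>
      intro Δ J
      refine ⟨[cflat (.semi t (C₂.fill Δ))], by simp [Ctx.fill], .cons ⟨by simp [cflat], ?_⟩ .nil⟩
      exact (Wle.ofEq (cfold_flat _).symm).trans (Wle.weak (.semiR t C₂) Δ J)
  | commaL C₂ t ih =>
      intro Δ J
      obtain ⟨G₂, p, f⟩ := ih Δ J
      refine ⟨G₂ ++ (cflat t).map (fun d => [d]), ?_, f₂_append f (f₂_grel_refl _)⟩
      show (cflat (C₂.fill Δ) ++ cflat t).Perm _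
      rw [List.flatten_append, flatten_singletons]
      exact p.append_right _
  | commaR t C₂ ih =>
      intro Δ J
      obtain ⟨G₂, p, f⟩ := ih Δ J
      refine ⟨(cflat t).map (fun d => [d]) ++ G₂, ?_, f₂_append (f₂_grel_refl _) f⟩
      show (cflat t ++ cflat (C₂.fill Δ)).Perm _
      rw [List.flatten_append, flatten_singletons]
      exact List.Perm.append_left _ p

theorem f₂_grel_of_beq {l : List Bunch} {m : List Bunch}
    (f : List.Forall₂ BunchEq l m) :
    List.Forall₂ GRel (l.map (fun d => [d])) m := by
  induction f with
  | nil => exact .nil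
  | cons hab _ ih => exact .cons ⟨by simp, .ofEq hab⟩ ih

/-- Comma-level grouping characterisation of `Wle`. -/
theorem wleCF {u w : Bunch} (h : Wle u w) :
    ∃ G : List (List Bunch), (cflat u).Perm G.flatten ∧
      List.Forall₂ GRel G (cflat w) := by
  induction h with
  | ofEq h =>
      rcases cflat_resp h with ⟨l, p, f⟩
      exact ⟨l.map (fun d => [d]), by rw [flatten_singletons]; exact p, f₂_grel_of_beq f⟩
  | weak C Δ J => exact wleCF_weak C Δ J
  | trans h₁ h₂ ih₁ ih₂ =>
      obtain ⟨G₁, p₁, f₁⟩ := ih₁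
      obtain ⟨G₂, p₂, f₂⟩ := ih₂
      obtain ⟨G₁', pG, f₁'⟩ := f₂_perm_right f₁ p₂
      obtain ⟨H, rfl, fH⟩ := f₂_flatten_split f₁'
      refine ⟨H.map List.flatten, ?_, ?_⟩
      · refine (p₁.trans (perm_flatten pG)).trans ?_
        rw [flatten_map_flatten]
      · have comp := f₂_comp fH f₂
        refine f₂_map_left List.flatten (comp.imp (fun hh d hc => ?_))
        obtain ⟨S, fS, hSne, hSw⟩ := hc
        have hne : ∀ T ∈ hh, T ≠ [] := f₂_grel_ne fS
        have hhne : hh ≠ [] := by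
          cases fS with
          | nil => exact absurd rfl hSne
          | cons _ _ => simp
        refine ⟨flatten_ne_nil hhne hne, ?_⟩
        refine (Wle.ofEq (cfold_flatten hne)).trans (Wle.trans ?_ hSw)
        exact cfold_f₂_wle (f₂_map_left cfold (fS.imp (fun _ _ g => g.2)))

theorem wle_reassemble {s L J : List Bunch} {p : Bunch}
    (f : List.Forall₂ Wle s L) (hperm : (sflat p).Perm (L ++ J)) (hL : L ≠ []) :
    Wle (sfold s) p := by
  have h1 : Wle (sfold s) (sfold L) := sfold_f₂_wle f
  have h2 : Wle (sfold L) (sfold (L ++ J)) := by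
    cases J with
    | nil => simp; exact .ofEq (.refl _)
    | cons a r =>
        exact (Wle.weak .hole (sfold L) (sfold (a :: r))).trans
          (.ofEq (sfold_append hL (by simp)).symm)
  exact (h1.trans h2).trans (.ofEq ((sfold_perm hperm).symm.trans (sfold_flat p).symm))

theorem wleSemiInv {u p q : Bunch} (h : Wle u (.semi p q)) :
    (∃ u₁ u₂, BunchEq u (.semi u₁ u₂) ∧ Wle u₁ p ∧ Wle u₂ q) ∨ Wle u p ∨ Wle u q := by
  obtain ⟨l, junk, f, hperm⟩ := wleFL h
  have hperm' : (sflat p ++ sflat q).Perm (l ++ junk) := hperm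
  obtain ⟨LA, LB, JA, JB, pL, pJ, pA, pB⟩ := perm_split hperm'
  obtain ⟨u', pu, f'⟩ := f₂_perm_right f pL
  obtain ⟨uA, uB, rfl, fA, fB⟩ := f₂_append_split f'
  have hALen := fA.length_eq
  have hBLen := fB.length_eq
  rcases List.eq_nil_or_concat' LA with rfl | hLA
  · -- all of u goes to q
    have huA : uA = [] := List.length_eq_zero_iff.mp (by simp [hALen])
    subst huA
    have hLB : LB ≠ [] := by
      rintro rfl
      cases fB
      exact sflat_ne_nil u (List.Perm.eq_nil pu)
    refine .inr (.inr ?_)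
    exact (Wle.ofEq ((sfold_flat u).trans (sfold_perm pu))).trans
      (wle_reassemble fB pB hLB)
  · rcases List.eq_nil_or_concat' LB with rfl | hLB
    · have huB : uB = [] := List.length_eq_zero_iff.mp (by simp [hBLen])
      subst huB
      have hLA' : LA ≠ [] := by rcases hLA with ⟨_, _, rfl⟩; simp
      refine .inr (.inl ?_)
      exact (Wle.ofEq ((sfold_flat u).trans (sfold_perm (by simpa using pu)))).trans
        (wle_reassemble fA pA hLA')
    · have hLA' : LA ≠ [] := by rcases hLA with ⟨_, _, rfl⟩; simp
      have hLB' : LB ≠ [] := by rcases hLB with ⟨_, _, rfl⟩; simp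
      have huA : uA ≠ [] := by
        intro e; subst e; exact hLA' (List.length_eq_zero_iff.mp (by simp [← hALen]))
      have huB : uB ≠ [] := by
        intro e; subst e; exact hLB' (List.length_eq_zero_iff.mp (by simp [← hBLen]))
      refine .inl ⟨sfold uA, sfold uB, ?_, wle_reassemble fA pA hLA',
        wle_reassemble fB pB hLB'⟩
      exact (sfold_flat u).trans ((sfold_perm pu).trans (sfold_append huA huB))

theorem grel_group_wle {G : List (List Bunch)} {p : Bunch}
    (f : List.Forall₂ GRel G (cflat p)) : Wle (cfold G.flatten) p := by
  have hne : ∀ S ∈ G, S ≠ [] := f₂_grel_ne f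
  refine (Wle.ofEq (cfold_flatten hne)).trans ?_
  refine (cfold_f₂_wle (f₂_map_left cfold (f.imp (fun _ _ g => g.2)))).trans ?_
  exact .ofEq (cfold_flat p).symm

theorem wleCommaInv {u p q : Bunch} (h : Wle u (.comma p q)) :
    ∃ u₁ u₂, BunchEq u (.comma u₁ u₂) ∧ Wle u₁ p ∧ Wle u₂ q := by
  obtain ⟨G, hperm, f⟩ := wleCF h
  have f' : List.Forall₂ GRel G (cflat p ++ cflat q) := f
  obtain ⟨Gp, Gq, rfl, fp, fq⟩ := f₂_append_split f'
  have hnep : ∀ S ∈ Gp, S ≠ [] := f₂_grel_ne fp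
  have hneq : ∀ S ∈ Gq, S ≠ [] := f₂_grel_ne fq
  have hGp : Gp ≠ [] := by
    intro e
    subst e
    have := fp.length_eq
    simp at this
    exact cflat_ne_nil p (List.length_eq_zero_iff.mp this.symm)
  have hGq : Gq ≠ [] := by
    intro e
    subst e
    have := fq.length_eq
    simp at this
    exact cflat_ne_nil q (List.length_eq_zero_iff.mp this.symm)
  refine ⟨cfold Gp.flatten, cfold Gq.flatten, ?_, grel_group_wle fp, grel_group_wle fq⟩
  refine (cfold_flat u).trans ((cfold_perm hperm).trans ?_)
  rw [List.flatten_append]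
  exact cfold_append (flatten_ne_nil hGp hnep) (flatten_ne_nil hGq hneq)

/-- MAIN absorption lemma: an mte-component insertion into the target of a
weakening can be pushed back as an essence extension of the source. -/
theorem wleAbsorb : ∀ (C : Ctx) (Γ' : Bunch) (Δo : Option Bunch) (u : Bunch),
    Wle u (C.fill Γ') →
    ∃ u', Essence u u' ∧ Wle u' (C.fill (.comma Γ' (mte Δo))) := by
  intro C
  induction C with
  | hole =>
      intro Γ' Δo u h
      exact ⟨.comma u (mte Δo), .insert .hole u Δo (.ofEq (.refl u)),
        wleFill h (.commaL .hole (mte Δo))⟩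
  | semiL C₂ t ih =>
      intro Γ' Δo u h
      rcases wleSemiInv h with ⟨u₁, u₂, he, h₁, h₂⟩ | h₁ | h₂
      · obtain ⟨u₁', e₁, w₁⟩ := ih Γ' Δo u₁ h₁
        exact ⟨.semi u₁' u₂, essPre he (essFill e₁ (.semiL .hole u₂)), wlePairS w₁ h₂⟩
      · obtain ⟨u', e, w⟩ := ih Γ' Δo u h₁
        exact ⟨u', e, w.trans (Wle.weak .hole _ t)⟩
      · exact ⟨u, .ofEq (.refl u),
          (h₂.trans (Wle.weak .hole t _)).trans (.ofEq (.semiComm _ _))⟩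
  | semiR t C₂ ih =>
      intro Γ' Δo u h
      rcases wleSemiInv h with ⟨u₁, u₂, he, h₁, h₂⟩ | h₁ | h₂
      · obtain ⟨u₂', e₂, w₂⟩ := ih Γ' Δo u₂ h₂
        exact ⟨.semi u₁ u₂', essPre he (essFill e₂ (.semiR u₁ .hole)), wlePairS h₁ w₂⟩
      · exact ⟨u, .ofEq (.refl u), h₁.trans (Wle.weak .hole t _)⟩
      · obtain ⟨u', e, w⟩ := ih Γ' Δo u h₂
        exact ⟨u', e, (w.trans (Wle.weak .hole _ t)).trans (.ofEq (.semiComm _ _))⟩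
  | commaL C₂ t ih =>
      intro Γ' Δo u h
      obtain ⟨u₁, u₂, he, h₁, h₂⟩ := wleCommaInv h
      obtain ⟨u₁', e₁, w₁⟩ := ih Γ' Δo u₁ h₁
      exact ⟨.comma u₁' u₂, essPre he (essFill e₁ (.commaL .hole u₂)), wlePairC w₁ h₂⟩
  | commaR t C₂ ih =>
      intro Γ' Δo u h
      obtain ⟨u₁, u₂, he, h₁, h₂⟩ := wleCommaInv h
      obtain ⟨u₂', e₂, w₂⟩ := ih Γ' Δo u₂ h₂
      exact ⟨.comma u₁ u₂', essPre he (essFill e₂ (.commaR u₁ .hole)), wlePairC h₁ w₂⟩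

theorem ceqSwap (a b c : Bunch) :
    BunchEq (.comma a (.comma b c)) (.comma b (.comma a c)) :=
  (BunchEq.commaAssoc a b c).symm.trans
    ((BunchEq.commaCongr (.commaComm a b) (.refl c)).trans (.commaAssoc b a c))

theorem ceq4 (a x b y : Bunch) :
    BunchEq (.comma (.comma a x) (.comma b y)) (.comma (.comma a b) (.comma x y)) :=
  (BunchEq.commaAssoc a x (.comma b y)).trans
    ((BunchEq.commaCongr (.refl a) (ceqSwap x b y)).trans
      (.symm (.commaAssoc a b (.comma x y))))

/-- core of `pairIns` for a comma context on the left. -/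
theorem pairInsCore (C₂ : Ctx) (t : Bunch)
    (ih : ∀ (Γ' : Bunch) (Δo : Option Bunch) (x y : Bunch),
      BunchEq (.comma x y) (C₂.fill Γ') →
      ∃ p q, Essence x p ∧ Essence y q ∧
        BunchEq (.comma p q) (C₂.fill (.comma Γ' (mte Δo)))) :
    ∀ (Γ' : Bunch) (Δo : Option Bunch) (x y : Bunch),
      BunchEq (.comma x y) (.comma (C₂.fill Γ') t) →
      ∃ p q, Essence x p ∧ Essence y q ∧
        BunchEq (.comma p q) (.comma (C₂.fill (.comma Γ' (mte Δo))) t) := by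
  intro Γ' Δo x y h
  obtain ⟨l, pl, fl⟩ := cflat_resp h
  have fl' : List.Forall₂ BunchEq l (cflat (C₂.fill Γ') ++ cflat t) := fl
  obtain ⟨lu, lt, rfl, fu, ft⟩ := f₂_append_split fl'
  have pl' : (cflat x ++ cflat y).Perm (lu ++ lt) := pl
  obtain ⟨xu, yu, xt, yt, pLu, pLt, px, py⟩ := perm_split pl'
  obtain ⟨mu, pmu, fu'⟩ := f₂_perm_left pLu fu
  obtain ⟨mt, pmt, ft'⟩ := f₂_perm_left pLt ft
  have equ : BunchEq (cfold (xu ++ yu)) (C₂.fill Γ') :=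
    (cfold_f₂ fu').trans ((cfold_perm pmu).symm.trans (cfold_flat _).symm)
  have eqt : BunchEq (cfold (xt ++ yt)) t :=
    (cfold_f₂ ft').trans ((cfold_perm pmt).symm.trans (cfold_flat _).symm)
  have eqx : BunchEq x (cfold (xu ++ xt)) := (cfold_flat x).trans (cfold_perm px)
  have eqy : BunchEq y (cfold (yu ++ yt)) := (cfold_flat y).trans (cfold_perm py)
  have hmu : mu ≠ [] := by
    intro e; subst e; exact cflat_ne_nil _ pmu.eq_nil
  have hmt : mt ≠ [] := by
    intro e; subst e; exact cflat_ne_nil _ pmt.eq_nil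
  have hxyu : xu ++ yu ≠ [] := by
    intro e; rw [e] at fu'; cases fu'; exact hmu rfl
  have hxyt : xt ++ yt ≠ [] := by
    intro e; rw [e] at ft'; cases ft'; exact hmt rfl
  rcases eq_or_ne xu ([] : List Bunch) with rfl | hxu
  · -- the inserted region comes entirely from `y`
    have hyu : yu ≠ [] := by simpa using hxyu
    have equ' : BunchEq (cfold yu) (C₂.fill Γ') := equ
    have hxt : xt ≠ [] := by
      intro e; subst e; exact cflat_ne_nil x px.eq_nil
    have eqx' : BunchEq x (cfold xt) := eqx
    have eq2 : Essence (cfold yu) (C₂.fill (.comma Γ' (mte Δo))) :=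
      .insert C₂ Γ' Δo (.ofEq equ')
    rcases eq_or_ne yt ([] : List Bunch) with rfl | hyt
    · have eqy' : BunchEq y (cfold yu) := eqy.trans (cfold_perm (by simp))
      have ht : BunchEq x t :=
        eqx'.trans ((cfold_perm (by simp : xt.Perm (xt ++ []))).trans eqt)
      exact ⟨x, _, .ofEq (.refl x), essPre eqy' eq2,
        (BunchEq.commaComm x _).trans (.commaCongr (.refl _) ht)⟩
    · have eqy2 : BunchEq y (.comma (cfold yu) (cfold yt)) :=
        eqy.trans (cfold_append hyu hyt)
      refine ⟨x, .comma (C₂.fill (.comma Γ' (mte Δo))) (cfold yt), .ofEq (.refl x),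
        essPre eqy2 (essFill eq2 (.commaL .hole (cfold yt))), ?_⟩
      exact (ceqSwap _ _ _).trans (.commaCongr (.refl _)
        ((BunchEq.commaCongr eqx' (.refl _)).trans ((cfold_append hxt hyt).symm.trans eqt)))
  · rcases eq_or_ne yu ([] : List Bunch) with rfl | hyu
    · -- the inserted region comes entirely from `x`
      have equ' : BunchEq (cfold xu) (C₂.fill Γ') :=
        (cfold_perm (by simp : xu.Perm (xu ++ []))).trans equ
      have hyt : yt ≠ [] := by
        intro e; subst e; exact cflat_ne_nil y py.eq_nil
      have eqy' : BunchEq y (cfold yt) := eqy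
      have eq2 : Essence (cfold xu) (C₂.fill (.comma Γ' (mte Δo))) :=
        .insert C₂ Γ' Δo (.ofEq equ')
      rcases eq_or_ne xt ([] : List Bunch) with rfl | hxt
      · have eqx' : BunchEq x (cfold xu) := eqx.trans (cfold_perm (by simp))
        exact ⟨_, y, essPre eqx' eq2, .ofEq (.refl y),
          .commaCongr (.refl _) (eqy.trans eqt)⟩
      · have eqx2 : BunchEq x (.comma (cfold xu) (cfold xt)) :=
          eqx.trans (cfold_append hxu hxt)
        refine ⟨.comma (C₂.fill (.comma Γ' (mte Δo))) (cfold xt), y,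
          essPre eqx2 (essFill eq2 (.commaL .hole (cfold xt))), .ofEq (.refl y), ?_⟩
        exact (BunchEq.commaAssoc _ _ _).trans (.commaCongr (.refl _)
          ((BunchEq.commaCongr (.refl _) eqy').trans ((cfold_append hxt hyt).symm.trans eqt)))
    · -- the inserted region mixes parts of both `x` and `y`
      have hab : BunchEq (.comma (cfold xu) (cfold yu)) (C₂.fill Γ') :=
        (cfold_append hxu hyu).symm.trans equ
      obtain ⟨p₂, q₂, ex₂, ey₂, he⟩ := ih Γ' Δo (cfold xu) (cfold yu) hab
      rcases eq_or_ne xt ([] : List Bunch) with rfl | hxt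
      · rcases eq_or_ne yt ([] : List Bunch) with rfl | hyt
        · simp at hxyt
        · have eqx' : BunchEq x (cfold xu) := eqx.trans (cfold_perm (by simp))
          have eqy2 : BunchEq y (.comma (cfold yu) (cfold yt)) :=
            eqy.trans (cfold_append hyu hyt)
          refine ⟨p₂, .comma q₂ (cfold yt), essPre eqx' ex₂,
            essPre eqy2 (essFill ey₂ (.commaL .hole (cfold yt))), ?_⟩
          exact (BunchEq.commaAssoc p₂ q₂ _).symm.trans (.commaCongr he eqt)
      · rcases eq_or_ne yt ([] : List Bunch) with rfl | hyt
        · have eqy' : BunchEq y (cfold yu) := eqy.trans (cfold_perm (by simp))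
          have eqx2 : BunchEq x (.comma (cfold xu) (cfold xt)) :=
            eqx.trans (cfold_append hxu hxt)
          have ht : BunchEq (cfold xt) t :=
            (cfold_perm (by simp : xt.Perm (xt ++ []))).trans eqt
          refine ⟨.comma p₂ (cfold xt), q₂,
            essPre eqx2 (essFill ex₂ (.commaL .hole (cfold xt))), essPre eqy' ey₂, ?_⟩
          exact (BunchEq.commaAssoc p₂ _ q₂).trans
            ((BunchEq.commaCongr (.refl p₂) (.commaComm _ q₂)).trans
              ((BunchEq.commaAssoc p₂ q₂ _).symm.trans (.commaCongr he ht)))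
        · have eqx2 : BunchEq x (.comma (cfold xu) (cfold xt)) :=
            eqx.trans (cfold_append hxu hxt)
          have eqy2 : BunchEq y (.comma (cfold yu) (cfold yt)) :=
            eqy.trans (cfold_append hyu hyt)
          refine ⟨.comma p₂ (cfold xt), .comma q₂ (cfold yt),
            essPre eqx2 (essFill ex₂ (.commaL .hole (cfold xt))),
            essPre eqy2 (essFill ey₂ (.commaL .hole (cfold yt))), ?_⟩
          exact (ceq4 p₂ (cfold xt) q₂ (cfold yt)).trans
            (.commaCongr he ((cfold_append hxt hyt).symm.trans eqt))

/-- Pair-splitting of a single mte-insertion at a congruence-position of a comma pair. -/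
theorem pairIns : ∀ (C : Ctx) (Γ' : Bunch) (Δo : Option Bunch) (x y : Bunch),
    BunchEq (.comma x y) (C.fill Γ') →
    ∃ p q, Essence x p ∧ Essence y q ∧
      BunchEq (.comma p q) (C.fill (.comma Γ' (mte Δo))) := by
  intro C
  induction C with
  | hole =>
      intro Γ' Δo x y h
      exact ⟨x, .comma y (mte Δo), .ofEq (.refl x),
        .insert .hole y Δo (.ofEq (.refl y)),
        (BunchEq.commaAssoc x y (mte Δo)).symm.trans (.commaCongr h (.refl _))⟩
  | semiL C₂ t ih =>
      intro Γ' Δo x y h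
      exact absurd (bkind_eq h) (by simp [bkind, Ctx.fill])
  | semiR t C₂ ih =>
      intro Γ' Δo x y h
      exact absurd (bkind_eq h) (by simp [bkind, Ctx.fill])
  | commaL C₂ t ih =>
      intro Γ' Δo x y h
      exact pairInsCore C₂ t ih Γ' Δo x y h
  | commaR t C₂ ih =>
      intro Γ' Δo x y h
      obtain ⟨p, q, ex, ey, he⟩ :=
        pairInsCore C₂ t ih Γ' Δo x y (h.trans (.commaComm t _))
      exact ⟨p, q, ex, ey, he.trans (.commaComm _ _)⟩

theorem essCommaSplit {x y w : Bunch} (h : Essence (.comma x y) w) :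
    ∃ p q, Essence x p ∧ Essence y q ∧ BunchEq (.comma p q) w := by
  induction h with
  | ofEq h => exact ⟨x, y, .ofEq (.refl x), .ofEq (.refl y), h⟩
  | insert C Γ' Δo _ ih =>
      obtain ⟨p, q, ex, ey, he⟩ := ih
      obtain ⟨p', q', ep, eq', he'⟩ := pairIns C Γ' Δo p q he
      exact ⟨p', q', essTrans ex ep, essTrans ey eq', he'⟩
  | insertSemi C Γ' Γ'' Δo _ ih =>
      obtain ⟨p, q, ex, ey, he⟩ := ih
      rw [show C.fill (Bunch.semi Γ' Γ'') = (C.comp (.semiL .hole Γ'')).fill Γ' from by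
        rw [comp_fill]; rfl] at he
      obtain ⟨p', q', ep, eq', he'⟩ := pairIns (C.comp (.semiL .hole Γ'')) Γ' Δo p q he
      rw [comp_fill] at he'
      exact ⟨p', q', essTrans ex ep, essTrans ey eq', he'⟩
  | congr _ heq ih =>
      obtain ⟨p, q, ex, ey, he⟩ := ih
      exact ⟨p, q, ex, ey, he.trans heq⟩

theorem essSplit {s Z : Bunch} (h : Essence s Z) :
    ∀ (Γt : Option Bunch) (a b : Bunch), BunchEq s (osemi Γt (.comma a b)) →
      ∃ R₁ R₂, Wle (.comma R₁ R₂) Z ∧ Essence a R₁ ∧ Essence b R₂ := by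
  induction h with
  | ofEq h =>
      intro Γt a b hs
      refine ⟨a, b, ?_, .ofEq (.refl a), .ofEq (.refl b)⟩
      have w1 : Wle (.comma a b) (osemi Γt (.comma a b)) := by
        cases Γt with
        | none => exact .ofEq (.refl _)
        | some g => exact (Wle.weak .hole _ g).trans (.ofEq (.semiComm _ g))
      exact w1.trans (.ofEq (hs.symm.trans h))
  | insert C Γ' Δo _ ih =>
      intro Γt a b hs
      obtain ⟨R₁, R₂, w, e₁, e₂⟩ := ih Γt a b hs
      obtain ⟨u', e, w'⟩ := wleAbsorb C Γ' Δo _ w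
      obtain ⟨p, q, ep, eq', he⟩ := essCommaSplit e
      exact ⟨p, q, (Wle.ofEq he).trans w', essTrans e₁ ep, essTrans e₂ eq'⟩
  | insertSemi C Γ' Γ'' Δo _ ih =>
      intro Γt a b hs
      obtain ⟨R₁, R₂, w, e₁, e₂⟩ := ih Γt a b hs
      rw [show C.fill (Bunch.semi Γ' Γ'') = (C.comp (.semiL .hole Γ'')).fill Γ' from by
        rw [comp_fill]; rfl] at w
      obtain ⟨u', e, w'⟩ := wleAbsorb (C.comp (.semiL .hole Γ'')) Γ' Δo _ w
      rw [comp_fill] at w'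
      obtain ⟨p, q, ep, eq', he⟩ := essCommaSplit e
      exact ⟨p, q, (Wle.ofEq he).trans w', essTrans e₁ ep, essTrans e₂ eq'⟩
  | congr _ heq ih =>
      intro Γt a b hs
      obtain ⟨R₁, R₂, w, e₁, e₂⟩ := ih Γt a b hs
      exact ⟨R₁, R₂, w.trans (.ofEq heq), e₁, e₂⟩

/-! ### Identity and interpretation -/

theorem idE : ∀ (A : BI) (Γt : Option Bunch) (Θ : Bunch),
    Essence (osemi Γt (.fm A)) Θ → ∃ n, LBIZ Candidate true Θ A n := by
  intro A
  induction A with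
  | var p => intro Γt Θ h; exact ⟨1, .id Γt p h⟩
  | top => intro Γt Θ h; exact ⟨1, .topR Θ⟩
  | bot =>
      intro Γt Θ h
      obtain ⟨C, rfl, _⟩ := essOcc h
      exact ⟨1, .botL C .bot⟩
  | mtop => intro Γt Θ h; exact ⟨1, .mtopR Γt h⟩
  | conj F G ihF ihG =>
      intro Γt Θ h
      obtain ⟨C, rfl, prop⟩ := essOcc h
      obtain ⟨Γu, e⟩ := prop (.semi (.fm F) (.fm G))
      have eF : Essence (osemi (some (osemi Γu (.fm G))) (.fm F))
          (C.fill (.semi (.fm F) (.fm G))) := by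
        refine essPre ?_ e
        cases Γu with
        | none => exact .semiComm _ _
        | some g =>
            exact (BunchEq.semiAssoc g _ _).trans (.semiCongr (.refl g) (.semiComm _ _))
      have eG : Essence (osemi (some (osemi Γu (.fm F))) (.fm G))
          (C.fill (.semi (.fm F) (.fm G))) := by
        refine essPre ?_ e
        cases Γu with
        | none => exact .refl _
        | some g => exact BunchEq.semiAssoc g _ _
      obtain ⟨n₁, d₁⟩ := ihF (some (osemi Γu (.fm G))) _ eF
      obtain ⟨n₂, d₂⟩ := ihG (some (osemi Γu (.fm F))) _ eG
      exact ⟨_, .conjL (.conjR d₁ d₂)⟩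
  | disj F G ihF ihG =>
      intro Γt Θ h
      obtain ⟨C, rfl, prop⟩ := essOcc h
      obtain ⟨Γu₁, e₁⟩ := prop (.fm F)
      obtain ⟨Γu₂, e₂⟩ := prop (.fm G)
      obtain ⟨n₁, d₁⟩ := ihF Γu₁ _ e₁
      obtain ⟨n₂, d₂⟩ := ihG Γu₂ _ e₂
      exact ⟨_, .disjL (.disjR₁ d₁) (.disjR₂ d₂)⟩
  | imp F G ihF ihG =>
      intro Γt Θ h
      have eΔ : Essence (osemi (some (osemi Γt (.fm F))) (.fm (.imp F G)))
          (.semi Θ (.fm F)) := by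
        have h2 := essFill h (.semiL .hole (.fm F))
        refine essPre ?_ h2
        cases Γt with
        | none => exact .semiComm _ _
        | some g =>
            exact (BunchEq.semiAssoc g _ _).trans
              ((BunchEq.semiCongr (.refl g) (.semiComm _ _)).trans
                (.symm (.semiAssoc g _ _)))
      obtain ⟨n₁, d₁⟩ := ihF (some Θ) _ (Essence.ofEq (.refl (.semi Θ (.fm F))))
      obtain ⟨n₂, d₂⟩ := ihG (some (.semi Θ (.fm F))) _
        (Essence.ofEq (BunchEq.semiComm (.semi Θ (.fm F)) (.fm G)))
      exact ⟨_, .impR (.impL (C := .hole) (some (osemi Γt (.fm F))) eΔ d₁ d₂)⟩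
  | star F G ihF ihG =>
      intro Γt Θ h
      obtain ⟨C, rfl, prop⟩ := essOcc h
      obtain ⟨Γu, e⟩ := prop (.comma (.fm F) (.fm G))
      obtain ⟨R₁, R₂, w, eF, eG⟩ := essSplit e Γu (.fm F) (.fm G) (.refl _)
      obtain ⟨n₁, d₁⟩ := ihF none R₁ eF
      obtain ⟨n₂, d₂⟩ := ihG none R₂ eG
      exact ⟨_, .starL (.starR (.inl (.inr w)) d₁ d₂)⟩
  | wand F G ihF ihG =>
      intro Γt Θ h
      obtain ⟨n₁, d₁⟩ := ihF none (.fm F) (.ofEq (.refl _))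
      have e₁ := essFill h (.semiL (.commaR (.fm F) .hole) (.fm G))
      have e₂ := Essence.insert (.semiR (.comma (.fm F) Θ) .hole) (.fm G) none e₁
      have e₃ : Essence (osemi (some (.comma (.fm F) (osemi Γt (.fm (.wand F G))))) (.fm G))
          (.semi (.comma (.fm .mtop) (.fm G)) (.comma (.fm F) Θ)) :=
        .congr e₂ ((BunchEq.semiComm _ _).trans (.semiCongr (.commaComm _ _) (.refl _)))
      obtain ⟨n₂, d₂⟩ := ihG _ _ e₃
      have cand : (some (Bunch.fm F) = none ∧ Bunch.fm F = .fm .mtop ∧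
            some (Bunch.fm .mtop) = none) ∨
          (∃ Γ' Rj, some (Bunch.fm F) = some Γ' ∧ some (Bunch.fm .mtop) = some Rj ∧
            (Candidate Γ' (.fm F) Rj ∨ Candidate Γ' Rj (.fm F))) :=
        Or.inr ⟨.fm F, .fm .mtop, rfl, rfl, Or.inl (Or.inl ⟨rfl, .ofEq (.refl _)⟩)⟩
      have dL := LBIZ.wandL (Cand := Candidate) (cut := true) (C := .hole) (H := G)
        (some (.fm F)) (some (.fm .mtop)) (.fm F) Γt h cand d₁ d₂
      exact ⟨_, .wandR (.equiv (.commaComm (.fm F) Θ) dL)⟩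

/-- Formula interpretation of a bunch. -/
def interp : Bunch → BI
  | .fm A => A
  | .semi a b => .conj (interp a) (interp b)
  | .comma a b => .star (interp a) (interp b)

theorem interpIntro : ∀ (Γ : Bunch) (Γt : Option Bunch),
    ∃ n, LBIZ Candidate true (osemi Γt Γ) (interp Γ) n := by
  intro Γ
  induction Γ with
  | fm A => intro Γt; exact idE A Γt _ (.ofEq (.refl _))
  | semi a b iha ihb =>
      intro Γt
      obtain ⟨n₁, d₁⟩ := iha (some (osemi Γt b))
      obtain ⟨n₂, d₂⟩ := ihb (some (osemi Γt a))
      have e₁ : BunchEq (osemi (some (osemi Γt b)) a) (osemi Γt (.semi a b)) := by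
        cases Γt with
        | none => exact .semiComm b a
        | some g =>
            exact (BunchEq.semiAssoc g b a).trans (.semiCongr (.refl g) (.semiComm b a))
      have e₂ : BunchEq (osemi (some (osemi Γt a)) b) (osemi Γt (.semi a b)) := by
        cases Γt with
        | none => exact .refl _
        | some g => exact BunchEq.semiAssoc g a b
      exact ⟨_, .conjR (.equiv e₁ d₁) (.equiv e₂ d₂)⟩
  | comma a b iha ihb =>
      intro Γt
      obtain ⟨n₁, d₁⟩ := iha none
      obtain ⟨n₂, d₂⟩ := ihb none
      have w : Wle (.comma a b) (osemi Γt (.comma a b)) := by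
        cases Γt with
        | none => exact .ofEq (.refl _)
        | some g => exact (Wle.weak .hole _ g).trans (.ofEq (.semiComm _ g))
      exact ⟨_, .starR (.inl (.inr w)) d₁ d₂⟩

theorem interpElim : ∀ (Γ : Bunch) (C : Ctx) (H : BI),
    (∃ n, LBIZ Candidate true (C.fill Γ) H n) →
    ∃ n, LBIZ Candidate true (C.fill (.fm (interp Γ))) H n := by
  intro Γ
  induction Γ with
  | fm A => intro C H h; exact h
  | semi a b iha ihb =>
      intro C H h
      have h₁ : ∃ n, LBIZ Candidate true (C.fill (.semi (.fm (interp a)) b)) H n := by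
        have := iha (C.comp (.semiL .hole b)) H (by rw [comp_fill]; exact h)
        rwa [comp_fill] at this
      have h₂ : ∃ n, LBIZ Candidate true
          (C.fill (.semi (.fm (interp a)) (.fm (interp b)))) H n := by
        have := ihb (C.comp (.semiR (.fm (interp a)) .hole)) H (by rw [comp_fill]; exact h₁)
        rwa [comp_fill] at this
      obtain ⟨n, d⟩ := h₂
      exact ⟨_, .conjL d⟩
  | comma a b iha ihb =>
      intro C H h
      have h₁ : ∃ n, LBIZ Candidate true (C.fill (.comma (.fm (interp a)) b)) H n := by
        have := iha (C.comp (.commaL .hole b)) H (by rw [comp_fill]; exact h)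
        rwa [comp_fill] at this
      have h₂ : ∃ n, LBIZ Candidate true
          (C.fill (.comma (.fm (interp a)) (.fm (interp b)))) H n := by
        have := ihb (C.comp (.commaR (.fm (interp a)) .hole)) H (by rw [comp_fill]; exact h₁)
        rwa [comp_fill] at this
      obtain ⟨n, d⟩ := h₂
      exact ⟨_, .starL d⟩

end Aux


/-- the context-sharing cut rule Cut_CS is derivable in
LBIZ + Cut. -/
theorem lbiz_cutcs_derivable (Γ₃ : Option Bunch) (Γ₁ : Bunch) (F H : BI)
    (C : Ctx)
    (h₁ : ∃ n, LBIZ Candidate true (osemi Γ₃ Γ₁) F n)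
    (h₂ : ∃ n, LBIZ Candidate true (C.fill (.semi (.fm F) Γ₁)) H n) :
    ∃ n, LBIZ Candidate true (C.fill (osemi Γ₃ Γ₁)) H n := by
  obtain ⟨n₁, d₁⟩ := h₁
  obtain ⟨n₂, d₂⟩ := h₂
  -- Step 1: cut `F` against the second premise (context `C[[·]; Γ₁]`).
  have s1 : ∃ n, LBIZ Candidate true (C.fill (.semi (osemi Γ₃ Γ₁) Γ₁)) H n := by
    have d₂' : LBIZ Candidate true ((C.comp (.semiL .hole Γ₁)).fill (.fm F)) H n₂ := by
      rw [comp_fill]; exact d₂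
    have := LBIZ.cutRule rfl d₁ d₂'
    rw [comp_fill] at this
    exact ⟨_, this⟩
  -- Step 2: replace the inner copy of `Γ₁` by its interpretation.
  have s2 : ∃ n, LBIZ Candidate true
      (C.fill (.semi (osemi Γ₃ Γ₁) (.fm (interp Γ₁)))) H n := by
    have := interpElim Γ₁ (C.comp (.semiR (osemi Γ₃ Γ₁) .hole)) H
      (by rw [comp_fill]; exact s1)
    rwa [comp_fill] at this
  -- Step 3: replace the outer copy by its interpretation.
  have s3 : ∃ n, LBIZ Candidate true
      (C.fill (.semi (.fm (interp (osemi Γ₃ Γ₁))) (.fm (interp Γ₁)))) H n := by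
    have := interpElim (osemi Γ₃ Γ₁) (C.comp (.semiL .hole (.fm (interp Γ₁)))) H
      (by rw [comp_fill]; exact s2)
    rwa [comp_fill] at this
  -- Step 4: contract the two formulas into one conjunction.
  obtain ⟨n₃, d₃⟩ := s3
  have s4 : LBIZ Candidate true
      (C.fill (.fm (.conj (interp (osemi Γ₃ Γ₁)) (interp Γ₁)))) H (n₃ + 1) :=
    .conjL d₃
  -- Step 5: the shared context proves the conjunction.
  obtain ⟨m₁, e₁⟩ := interpIntro (osemi Γ₃ Γ₁) none
  obtain ⟨m₂, e₂⟩ := interpIntro Γ₁ Γ₃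
  have s5 : LBIZ Candidate true (osemi Γ₃ Γ₁)
      (.conj (interp (osemi Γ₃ Γ₁)) (interp Γ₁)) (max m₁ m₂ + 1) :=
    .conjR e₁ e₂
  -- Step 6: final cut.
  have := LBIZ.cutRule rfl s5 s4
  exact ⟨_, this⟩
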